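/- arXiv:2204.04092 — 9 statements merged into one kernel-verified Lean document; each statement's English description precedes it below -/
import Mathlib

section
/- (Proposition 2.3, worst-case for number recovery) For every d ≥ 1, integer n ≥ 2, Ω > 0, τ > 0, integer T ≥ 0 and reals 0 < σ < m_min, there exist pairwise distinct triples (a_j, y_j, τ v_j), j = 1,…,n (a_j ∈ ℂ, y_j, v_j ∈ ℝ^d), and pairwise distinct triples (â_j, ŷ_j, τ v̂_j), j = 1,…,n−1, such that |Σ_{j=1}^{n−1} â_j exp(i(ŷ_j + t τ v̂_j)·ω) − Σ_{j=1}^n a_j exp(i(y_j + t τ v_j)·ω)| < σ for all ω ∈ ℝ^d with ‖ω‖₂ ≤ Ω and all t = 0,…,T; moreover min_{1≤j≤n} |a_j| = m_min and, with α_j := (y_j, τ v_j) ∈ ℝ^{2d}, min_{p≠j} ‖α_p − α_j‖₂ = (0.81 e^{−3/2}/Ω) · (σ/m_min)^{1/(2n−2)}. -/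
/-- Concatenation of two vectors of `ℝ^d` into a vector of `ℝ^{2d}`. -/
noncomputable def concatVec {d : ℕ} (y w : EuclideanSpace ℝ (Fin d)) :
    EuclideanSpace ℝ (Fin d ⊕ Fin d) := WithLp.toLp 2 (Sum.elim y w)

set_option maxHeartbeats 2000000
lemma sum_split (N : ℕ) (f : ℕ → ℂ) :
    ∑ j ∈ Finset.range (2*N+1), f j
      = (∑ i ∈ Finset.range (N+1), f (2*i)) + ∑ i ∈ Finset.range N, f (2*i+1) := by
  induction N with
  | zero => simp
  | succ N ih =>
    have h1 : 2*(N+1)+1 = (2*N+1) + 1 + 1 := by ring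
    rw [h1, Finset.sum_range_succ, Finset.sum_range_succ, ih,
      Finset.sum_range_succ (fun i => f (2*i)) (N+1), Finset.sum_range_succ (fun i => f (2*i+1)) N]
    have h2 : 2*(N+1) = 2*N+1+1 := by ring
    rw [h2]; ring

lemma key_id (N : ℕ) (z : ℂ) :
    (∑ i ∈ Finset.range (N+1), ((2*N).choose (2*i) : ℂ) * z^(2*i))
      - (∑ i ∈ Finset.range N, ((2*N).choose (2*i+1) : ℂ) * z^(2*i+1)) = (1-z)^(2*N) := by
  have h := add_pow (-z) 1 (2*N)
  simp only [one_pow, mul_one] at h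
  have h2 : (1 - z)^(2*N) = ∑ j ∈ Finset.range (2*N+1), (-z)^j * ((2*N).choose j : ℂ) := by
    rw [← h]; ring_nf
  rw [h2, sum_split]
  have he : ∀ i : ℕ, (-z)^(2*i) * ((2*N).choose (2*i) : ℂ) = ((2*N).choose (2*i) : ℂ) * z^(2*i) := by
    intro i; rw [neg_pow, pow_mul]; simp [pow_mul]; ring
  have ho : ∀ i : ℕ, (-z)^(2*i+1) * ((2*N).choose (2*i+1) : ℂ) = -(((2*N).choose (2*i+1) : ℂ) * z^(2*i+1)) := by
    intro i; rw [neg_pow]; simp [pow_add, pow_mul]; ring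
  simp only [he, ho, Finset.sum_neg_distrib]
  ring


/-- Proposition 2.3: worst-case example for number recovery of location–velocity pairs. -/
theorem worst_case_number_recovery
    (d n T : ℕ) (hd : 1 ≤ d) (hn : 2 ≤ n)
    (Ω τ σ mmin : ℝ) (hΩ : 0 < Ω) (hτ : 0 < τ) (hσ0 : 0 < σ) (hσm : σ < mmin) :
    ∃ (a : Fin n → ℂ) (y v : Fin n → EuclideanSpace ℝ (Fin d))
      (b : Fin (n - 1) → ℂ) (yhat vhat : Fin (n - 1) → EuclideanSpace ℝ (Fin d)),
      -- both families consist of pairwise distinct triples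
      Function.Injective (fun j => (a j, y j, τ • v j)) ∧
      Function.Injective (fun j => (b j, yhat j, τ • vhat j)) ∧
      -- the two exponential sums are σ-close on all frames
      (∀ t ≤ T, ∀ ω : EuclideanSpace ℝ (Fin d), ‖ω‖ ≤ Ω →
        ‖((∑ j, b j * Complex.exp (Complex.I *
              ((inner ℝ (yhat j + (t : ℝ) • τ • vhat j) ω : ℝ) : ℂ))) -
           (∑ j, a j * Complex.exp (Complex.I *
              ((inner ℝ (y j + (t : ℝ) • τ • v j) ω : ℝ) : ℂ))))‖ < σ) ∧
      -- `mmin` is the minimum modulus of the amplitudes `a_j`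
      (∀ j, mmin ≤ ‖a j‖) ∧ (∃ j, ‖a j‖ = mmin) ∧
      -- the minimum separation of the `α_j = (y_j, τ v_j)` is exactly the stated value
      (∀ p j, p ≠ j →
        0.81 * Real.exp (-(3 : ℝ) / 2) / Ω * (σ / mmin) ^ ((1 : ℝ) / (2 * (n : ℝ) - 2)) ≤
          ‖concatVec (y p) (τ • v p) - concatVec (y j) (τ • v j)‖) ∧
      (∃ p j, p ≠ j ∧
        ‖concatVec (y p) (τ • v p) - concatVec (y j) (τ • v j)‖ =
          0.81 * Real.exp (-(3 : ℝ) / 2) / Ω *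
            (σ / mmin) ^ ((1 : ℝ) / (2 * (n : ℝ) - 2))) := by

  obtain ⟨N, rfl⟩ : ∃ N, n = N + 1 := ⟨n - 1, by omega⟩
  have hN : 1 ≤ N := by omega
  have hm0 : 0 < mmin := lt_trans hσ0 hσm
  have hq0 : 0 < σ / mmin := div_pos hσ0 hm0
  have hq1 : σ / mmin < 1 := (div_lt_one hm0).mpr hσm
  -- notation
  set ρ : ℝ := (σ / mmin) ^ ((1 : ℝ) / (2 * ((N + 1 : ℕ) : ℝ) - 2)) with hρdef
  set s : ℝ := 0.81 * Real.exp (-(3 : ℝ) / 2) / Ω * ρ with hsdef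
  set h : ℝ := s / 2 with hhdef
  have hexpcast : (1 : ℝ) / (2 * ((N + 1 : ℕ) : ℝ) - 2) = 1 / ((2 * N : ℕ) : ℝ) := by
    push_cast; congr 1; ring
  have h2N : ((2 * N : ℕ) : ℝ) ≠ 0 := by
    have : (0:ℕ) < 2 * N := by omega
    exact_mod_cast this.ne'
  have hρ0 : 0 < ρ := Real.rpow_pos_of_pos hq0 _
  have hρ1 : ρ < 1 := by
    rw [hρdef, hexpcast]
    apply Real.rpow_lt_one (le_of_lt hq0) hq1
    positivity
  have hρpow : ρ ^ (2 * N) = σ / mmin := by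
    rw [hρdef, hexpcast, ← Real.rpow_natCast ((σ/mmin) ^ ((1:ℝ)/((2*N:ℕ):ℝ))) (2*N),
      ← Real.rpow_mul hq0.le]
    rw [one_div, inv_mul_cancel₀ h2N, Real.rpow_one]
  have hexp1 : Real.exp (-(3:ℝ)/2) ≤ 1 := by
    have := Real.exp_le_exp.mpr (show (-(3:ℝ)/2) ≤ 0 by norm_num)
    simpa using this
  have hexp0 : 0 < Real.exp (-(3:ℝ)/2) := Real.exp_pos _
  have hs0 : 0 < s := by
    rw [hsdef]; positivity
  have hh0 : 0 < h := by rw [hhdef]; positivity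
  have hhΩ : 2 * (h * Ω) = 0.81 * Real.exp (-(3:ℝ)/2) * ρ := by
    rw [hhdef, hsdef]; field_simp
  have hc01 : 0.81 * Real.exp (-(3:ℝ)/2) * ρ < 1 := by nlinarith
  -- the basis vector
  set i0 : Fin d := ⟨0, hd⟩ with hi0
  set e1 : EuclideanSpace ℝ (Fin d) := EuclideanSpace.single i0 (1:ℝ) with he1
  have he1norm : ‖e1‖ = 1 := by rw [he1, EuclideanSpace.norm_single]; norm_num
  have he1ne : e1 ≠ 0 := by
    intro hc; rw [hc] at he1norm; simp at he1norm
  have hsmul_inj : ∀ c c' : ℝ, c • e1 = c' • e1 → c = c' := by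
    intro c c' hcc
    have : (c - c') • e1 = 0 := by rw [sub_smul, hcc, sub_self]
    rcases smul_eq_zero.mp this with h' | h'
    · linarith [sub_eq_zero.mp h']
    · exact absurd h' he1ne
  -- the data
  refine ⟨fun j => (mmin : ℂ) * ((2*N).choose (2*(j:ℕ)) : ℂ),
    fun j => ((2*(j:ℕ) : ℝ) * h) • e1, fun _ => 0,
    fun k => (mmin : ℂ) * ((2*N).choose (2*(k:ℕ)+1) : ℂ),
    fun k => ((2*(k:ℕ)+1 : ℝ) * h) • e1, fun _ => 0,
    ?_, ?_, ?_, ?_, ?_, ?_, ?_⟩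
  · -- injectivity of a-family
    intro p q hpq
    simp only [Prod.mk.injEq] at hpq
    have := hsmul_inj _ _ hpq.2.1
    have hpq' : (2*(p:ℕ) : ℝ) = (2*(q:ℕ) : ℝ) := mul_right_cancel₀ hh0.ne' this
    have : (p:ℕ) = (q:ℕ) := by exact_mod_cast (by linarith : ((p:ℕ):ℝ) = ((q:ℕ):ℝ))
    exact Fin.ext this
  · -- injectivity of b-family
    intro p q hpq
    simp only [Prod.mk.injEq] at hpq
    have := hsmul_inj _ _ hpq.2.1
    have hpq' : (2*(p:ℕ)+1 : ℝ) = (2*(q:ℕ)+1 : ℝ) := mul_right_cancel₀ hh0.ne' this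
    have : (p:ℕ) = (q:ℕ) := by exact_mod_cast (by linarith : ((p:ℕ):ℝ) = ((q:ℕ):ℝ))
    exact Fin.ext this
  · -- closeness
    intro t ht ω hω
    set u : ℝ := inner ℝ e1 ω with hu
    have huΩ : |u| ≤ Ω := by
      have h1 := abs_real_inner_le_norm e1 ω
      rw [he1norm, one_mul] at h1
      exact h1.trans hω
    set z : ℂ := Complex.exp (Complex.I * ((h * u : ℝ) : ℂ)) with hz
    have hzpow : ∀ q : ℕ, Complex.exp (Complex.I * (((q:ℝ) * h * u : ℝ) : ℂ)) = z ^ q := by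
      intro q
      rw [hz, ← Complex.exp_nat_mul]; congr 1; push_cast; ring
    have hinner : ∀ c : ℝ, (inner ℝ ((c • e1 : EuclideanSpace ℝ (Fin d)) + (t:ℝ) • τ • (0 : EuclideanSpace ℝ (Fin d))) ω : ℝ) = c * u := by
      intro c
      rw [smul_zero, smul_zero, add_zero, real_inner_smul_left, hu]
    have hrw : ∀ (c q : ℕ), Complex.exp (Complex.I *
        ((inner ℝ (((c : ℝ) * h) • e1 + (t:ℝ) • τ • (0 : EuclideanSpace ℝ (Fin d))) ω : ℝ) : ℂ)) = z ^ c := by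
      intro c q
      rw [hinner]
      have : (c : ℝ) * h * u = (c:ℝ) * h * u := rfl
      rw [show ((c:ℝ) * h * u : ℝ) = ((c:ℝ) * h * u : ℝ) from rfl]
      exact hzpow c
    have hsum : (∑ k : Fin (N+1-1), ((mmin:ℂ) * ((2*N).choose (2*(k:ℕ)+1) : ℂ)) * Complex.exp (Complex.I *
            ((inner ℝ (((2*(k:ℕ)+1 : ℝ) * h) • e1 + (t:ℝ) • τ • (0 : EuclideanSpace ℝ (Fin d))) ω : ℝ) : ℂ)))
        - (∑ j : Fin (N+1), ((mmin:ℂ) * ((2*N).choose (2*(j:ℕ)) : ℂ)) * Complex.exp (Complex.I *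
            ((inner ℝ (((2*(j:ℕ) : ℝ) * h) • e1 + (t:ℝ) • τ • (0 : EuclideanSpace ℝ (Fin d))) ω : ℝ) : ℂ)))
        = -(mmin:ℂ) * (1 - z)^(2*N) := by
      have hterm1 : ∀ k : Fin (N+1-1), ((mmin:ℂ) * ((2*N).choose (2*(k:ℕ)+1) : ℂ)) * Complex.exp (Complex.I *
            ((inner ℝ (((2*(k:ℕ)+1 : ℝ) * h) • e1 + (t:ℝ) • τ • (0 : EuclideanSpace ℝ (Fin d))) ω : ℝ) : ℂ))
          = (mmin:ℂ) * (((2*N).choose (2*(k:ℕ)+1) : ℂ) * z ^ (2*(k:ℕ)+1)) := by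
        intro k
        have := hrw (2*(k:ℕ)+1) 0
        push_cast at this ⊢
        rw [this]; ring
      have hterm2 : ∀ j : Fin (N+1), ((mmin:ℂ) * ((2*N).choose (2*(j:ℕ)) : ℂ)) * Complex.exp (Complex.I *
            ((inner ℝ (((2*(j:ℕ) : ℝ) * h) • e1 + (t:ℝ) • τ • (0 : EuclideanSpace ℝ (Fin d))) ω : ℝ) : ℂ))
          = (mmin:ℂ) * (((2*N).choose (2*(j:ℕ)) : ℂ) * z ^ (2*(j:ℕ))) := by
        intro j
        have := hrw (2*(j:ℕ)) 0
        push_cast at this ⊢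
        rw [this]; ring
      rw [Finset.sum_congr rfl (fun k _ => hterm1 k), Finset.sum_congr rfl (fun j _ => hterm2 j),
        ← Finset.mul_sum, ← Finset.mul_sum, ← mul_sub]
      have hsplit : (∑ k : Fin (N+1-1), ((2*N).choose (2*(k:ℕ)+1) : ℂ) * z ^ (2*(k:ℕ)+1))
          - (∑ j : Fin (N+1), ((2*N).choose (2*(j:ℕ)) : ℂ) * z ^ (2*(j:ℕ)))
          = -((1-z)^(2*N)) := by
        rw [Fin.sum_univ_eq_sum_range (fun k => ((2*N).choose (2*k+1) : ℂ) * z ^ (2*k+1)) (N+1-1),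
          Fin.sum_univ_eq_sum_range (fun j => ((2*N).choose (2*j) : ℂ) * z ^ (2*j)) (N+1)]
        simp only [Nat.add_sub_cancel]
        rw [← key_id N z]; ring
      rw [hsplit]; ring
    rw [hsum]
    -- now bound
    have habs : ‖(-(mmin:ℂ) * (1-z)^(2*N))‖
        = mmin * ‖(1-z)‖ ^ (2*N) := by
      rw [norm_mul, norm_pow, norm_neg]
      simp [Complex.norm_real, abs_of_pos hm0]
    rw [habs]
    have hzabs : ‖(1 - z)‖ ≤ 2 * (h * |u|) := by
      have harg : ‖(Complex.I * ((h * u : ℝ) : ℂ))‖ = h * |u| := by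
        simp [Complex.norm_real, abs_of_pos hh0, abs_mul]
      have hle1 : ‖(Complex.I * ((h * u : ℝ) : ℂ))‖ ≤ 1 := by
        rw [harg]
        have : h * |u| ≤ h * Ω := mul_le_mul_of_nonneg_left huΩ hh0.le
        nlinarith
      have := Complex.norm_exp_sub_one_le hle1
      calc ‖(1 - z)‖ = ‖(z - 1)‖ := norm_sub_rev 1 z
        _ ≤ 2 * ‖(Complex.I * ((h * u : ℝ) : ℂ))‖ := this
        _ = 2 * (h * |u|) := by rw [harg]
    have hfinal : mmin * ‖(1-z)‖ ^ (2*N) < σ := by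
      have hb1 : ‖(1-z)‖ ^ (2*N) ≤ (2 * (h * |u|)) ^ (2*N) :=
        pow_le_pow_left₀ (norm_nonneg _) hzabs _
      have hb2 : (2 * (h * |u|)) ^ (2*N) ≤ (2 * (h * Ω)) ^ (2*N) := by
        apply pow_le_pow_left₀ (by positivity)
        nlinarith
      have hb3 : (2 * (h * Ω)) ^ (2*N) = (0.81 * Real.exp (-(3:ℝ)/2)) ^ (2*N) * ρ ^ (2*N) := by
        rw [hhΩ, mul_pow]
      have hb4 : (0.81 * Real.exp (-(3:ℝ)/2)) ^ (2*N) < 1 := by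
        apply pow_lt_one₀ (by positivity) (by nlinarith) (by omega)
      calc mmin * ‖(1-z)‖ ^ (2*N) ≤ mmin * (2 * (h * Ω)) ^ (2*N) := by
            apply mul_le_mul_of_nonneg_left (hb1.trans hb2) hm0.le
        _ = (0.81 * Real.exp (-(3:ℝ)/2)) ^ (2*N) * (mmin * ρ ^ (2*N)) := by rw [hb3]; ring
        _ = (0.81 * Real.exp (-(3:ℝ)/2)) ^ (2*N) * σ := by
            rw [hρpow]; field_simp
        _ < 1 * σ := by apply mul_lt_mul_of_pos_right hb4 hσ0
        _ = σ := one_mul σ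
    exact hfinal
  · -- min amplitude lower bound
    intro j
    have hc : 1 ≤ ((2*N).choose (2*(j:ℕ)) : ℝ) := by
      have : 0 < (2*N).choose (2*(j:ℕ)) := Nat.choose_pos (by omega : 2*(j:ℕ) ≤ 2*N)
      exact_mod_cast this
    rw [norm_mul]
    simp only [Complex.norm_real, Real.norm_eq_abs, Complex.norm_natCast]
    rw [abs_of_pos hm0]
    nlinarith
  · -- amplitude attaining mmin
    refine ⟨⟨0, by omega⟩, ?_⟩
    simp [Nat.choose_zero_right, abs_of_pos hm0, Complex.norm_real]
  · -- separation lower bound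
    intro p q hpq
    have hτ0 : τ • (0 : EuclideanSpace ℝ (Fin d)) = 0 := smul_zero τ
    rw [hτ0]
    have hsub : concatVec (((2*(p:ℕ) : ℝ) * h) • e1) 0 - concatVec (((2*(q:ℕ) : ℝ) * h) • e1) 0
        = concatVec ((((2*(p:ℕ) : ℝ) * h) - ((2*(q:ℕ) : ℝ) * h)) • e1) 0 := by
      ext i
      cases i <;> simp [concatVec, sub_smul]
    have hnorm : ∀ w : EuclideanSpace ℝ (Fin d), ‖concatVec w 0‖ = ‖w‖ := by
      intro w
      rw [EuclideanSpace.norm_eq, EuclideanSpace.norm_eq, Fintype.sum_sum_type]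
      simp [concatVec]
    rw [hsub, hnorm, norm_smul, he1norm, mul_one]
    have hge : (2:ℝ) ≤ |(2*(p:ℕ) : ℝ) - (2*(q:ℕ) : ℝ)| := by
      have hne : (p:ℕ) ≠ (q:ℕ) := fun hc => hpq (Fin.ext hc)
      have h1 : 1 ≤ |((p:ℕ):ℝ) - ((q:ℕ):ℝ)| := by
        rcases hne.lt_or_gt with h' | h'
        · have : ((p:ℕ):ℝ) + 1 ≤ ((q:ℕ):ℝ) := by exact_mod_cast h'
          rw [abs_sub_comm, abs_of_nonneg (by linarith)]; linarith
        · have : ((q:ℕ):ℝ) + 1 ≤ ((p:ℕ):ℝ) := by exact_mod_cast h'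
          rw [abs_of_nonneg (by linarith)]; linarith
      calc (2:ℝ) = 2 * 1 := by norm_num
        _ ≤ 2 * |((p:ℕ):ℝ) - ((q:ℕ):ℝ)| := by linarith
        _ = |(2*(p:ℕ) : ℝ) - (2*(q:ℕ) : ℝ)| := by
            rw [show (2*(p:ℕ) : ℝ) - (2*(q:ℕ) : ℝ) = 2 * (((p:ℕ):ℝ) - ((q:ℕ):ℝ)) by push_cast; ring,
              abs_mul, abs_two]
    have : ‖(((2*(p:ℕ) : ℝ) * h) - ((2*(q:ℕ) : ℝ) * h))‖ = |(2*(p:ℕ) : ℝ) - (2*(q:ℕ) : ℝ)| * h := by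
      rw [Real.norm_eq_abs, ← sub_mul, abs_mul, abs_of_pos hh0]
    rw [this]
    calc (0.81 * Real.exp (-(3:ℝ)/2) / Ω) * ρ = s := by rw [hsdef]
      _ = 2 * h := by rw [hhdef]; ring
      _ ≤ |(2*(p:ℕ) : ℝ) - (2*(q:ℕ) : ℝ)| * h := by nlinarith
  · -- separation attained
    refine ⟨⟨1, by omega⟩, ⟨0, by omega⟩, by simp [Fin.ext_iff], ?_⟩
    have hτ0 : τ • (0 : EuclideanSpace ℝ (Fin d)) = 0 := smul_zero τ
    rw [hτ0]
    have hnorm : ∀ w : EuclideanSpace ℝ (Fin d), ‖concatVec w 0‖ = ‖w‖ := by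
      intro w
      rw [EuclideanSpace.norm_eq, EuclideanSpace.norm_eq, Fintype.sum_sum_type]
      simp [concatVec]
    have hsub : ∀ c c' : ℝ, concatVec (c • e1) 0 - concatVec (c' • e1) 0
        = concatVec ((c - c') • e1) 0 := by
      intro c c'
      ext i
      cases i <;> simp [concatVec, sub_smul]
    rw [hsub, hnorm, norm_smul, he1norm, mul_one]
    have : ((2*((⟨1, by omega⟩ : Fin (N+1)):ℕ) : ℝ) * h) - ((2*((⟨0, by omega⟩ : Fin (N+1)):ℕ) : ℝ) * h) = 2 * h := by
      norm_num
    rw [this]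
    rw [Real.norm_eq_abs, abs_of_pos (by positivity)]
    rw [hhdef]; ring
end

section
/- (Proposition 2.4, worst-case for number recovery with distinct velocities) For every d ≥ 1, integer n ≥ 2, Ω > 0, τ > 0, integer T ≥ 0 and reals 0 < σ < m_min, there exist pairwise distinct triples (a_j, y_j, τ v_j), j = 1,…,n, whose velocities v_j are pairwise distinct, and pairwise distinct triples (â_j, ŷ_j, τ v̂_j), j = 1,…,n−1, such that |Σ_{j=1}^{n−1} â_j exp(i(ŷ_j + t τ v̂_j)·ω) − Σ_{j=1}^n a_j exp(i(y_j + t τ v_j)·ω)| < σ for all ‖ω‖₂ ≤ Ω and all t = 0,…,T; moreover min_{1≤j≤n} |a_j| = m_min and, with α_j := (y_j, τ v_j) ∈ ℝ^{2d}, min_{p≠j} ‖α_p − α_j‖₂ = (0.81 √2 e^{−3/2}/((T+1)Ω)) · (σ/m_min)^{1/(2n−2)}. -/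
lemma sum_range_even_odd (M : ℕ) (F : ℕ → ℂ) :
    ∑ i ∈ Finset.range (2*M+1), F i
      = ∑ j ∈ Finset.range (M+1), F (2*j) + ∑ k ∈ Finset.range M, F (2*k+1) := by
  induction M with
  | zero => simp
  | succ M ih =>
      have h1 : 2*(M+1)+1 = (2*M+1) + 1 + 1 := by ring
      rw [h1, Finset.sum_range_succ, Finset.sum_range_succ, ih,
        Finset.sum_range_succ (fun j => F (2*j)) (M+1),
        Finset.sum_range_succ (fun k => F (2*k+1)) M]
      have e1 : 2*M+1+1 = 2*(M+1) := by ring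
      rw [e1]; ring

lemma key_alg (m : ℕ) (M : ℝ) (z : ℂ) :
    (∑ k ∈ Finset.range (m+1), ((M * ((2*m+2).choose (2*k+1)) : ℝ) : ℂ) * z^(2*k+1)) -
    (∑ j ∈ Finset.range (m+2), ((M * ((2*m+2).choose (2*j)) : ℝ) : ℂ) * z^(2*j))
      = -((M:ℂ) * (1-z)^(2*m+2)) := by
  have hb : (1 - z)^(2*m+2)
      = ∑ i ∈ Finset.range (2*m+3), (-z)^i * ((2*m+2).choose i) := by
    rw [show (1:ℂ) - z = -z + 1 by ring, add_pow]
    simp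
  have hsplit := sum_range_even_odd (m+1) (fun i => (-z)^i * (((2*m+2).choose i : ℕ) : ℂ))
  rw [show 2*(m+1)+1 = 2*m+3 by ring] at hsplit
  rw [hb, hsplit]
  have he : ∀ j : ℕ, ((-z)^(2*j) : ℂ) = z^(2*j) := fun j => by
    rw [Even.neg_pow ⟨j, by ring⟩]
  have ho : ∀ k : ℕ, ((-z)^(2*k+1) : ℂ) = -z^(2*k+1) := fun k => by
    rw [Odd.neg_pow ⟨k, by ring⟩]
  push_cast
  simp only [he, ho]
  have hS1 : ∑ x ∈ Finset.range (m+2), (M:ℂ)*((2*m+2).choose (2*x)) * z^(2*x)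
      = (M:ℂ) * ∑ x ∈ Finset.range (m+1+1), z^(2*x)*((2*m+2).choose (2*x)) := by
    rw [Finset.mul_sum]; exact Finset.sum_congr rfl fun x _ => by ring
  have hS2 : ∑ x ∈ Finset.range (m+1), (M:ℂ)*((2*m+2).choose (2*x+1)) * z^(2*x+1)
      = -((M:ℂ) * ∑ x ∈ Finset.range (m+1), -z^(2*x+1)*((2*m+2).choose (2*x+1))) := by
    rw [Finset.mul_sum, ← Finset.sum_neg_distrib]
    exact Finset.sum_congr rfl fun x _ => by ring
  rw [hS1, hS2]; ring

lemma concat_sub_norm {d : ℕ} (u1 u2 : EuclideanSpace ℝ (Fin d)) :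
    ‖concatVec 0 u1 - concatVec 0 u2‖ = ‖u1 - u2‖ := by
  have h : concatVec 0 u1 - concatVec 0 u2
      = WithLp.toLp 2 (Sum.elim (0 : EuclideanSpace ℝ (Fin d)) (u1 - u2)) := by
    ext i
    cases i with
    | inl x => simp [concatVec]
    | inr x => simp [concatVec]
  rw [h, EuclideanSpace.norm_eq, EuclideanSpace.norm_eq, Fintype.sum_sum_type]
  simp


set_option maxHeartbeats 1000000 in
/-- Proposition 2.4: worst-case example for number recovery with pairwise
distinct velocities. -/
theorem worst_case_number_recovery_distinct_velocities
    (d n T : ℕ) (hd : 1 ≤ d) (hn : 2 ≤ n)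
    (Ω τ σ mmin : ℝ) (hΩ : 0 < Ω) (hτ : 0 < τ) (hσ0 : 0 < σ) (hσm : σ < mmin) :
    ∃ (a : Fin n → ℂ) (y v : Fin n → EuclideanSpace ℝ (Fin d))
      (b : Fin (n - 1) → ℂ) (yhat vhat : Fin (n - 1) → EuclideanSpace ℝ (Fin d)),
      -- both families consist of pairwise distinct triples
      Function.Injective (fun j => (a j, y j, τ • v j)) ∧
      Function.Injective (fun j => (b j, yhat j, τ • vhat j)) ∧
      -- the velocities are pairwise distinct
      Function.Injective v ∧
      -- the two exponential sums are σ-close on all frames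
      (∀ t ≤ T, ∀ ω : EuclideanSpace ℝ (Fin d), ‖ω‖ ≤ Ω →
        ‖((∑ j, b j * Complex.exp (Complex.I *
              ((inner ℝ (yhat j + (t : ℝ) • τ • vhat j) ω : ℝ) : ℂ))) -
           (∑ j, a j * Complex.exp (Complex.I *
              ((inner ℝ (y j + (t : ℝ) • τ • v j) ω : ℝ) : ℂ))))‖ < σ) ∧
      -- `mmin` is the minimum modulus of the amplitudes `a_j`
      (∀ j, mmin ≤ ‖a j‖) ∧ (∃ j, ‖a j‖ = mmin) ∧
      -- the minimum separation of the `α_j = (y_j, τ v_j)` is exactly the stated value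
      (∀ p j, p ≠ j →
        0.81 * Real.sqrt 2 * Real.exp (-(3 : ℝ) / 2) / (((T : ℝ) + 1) * Ω) *
            (σ / mmin) ^ ((1 : ℝ) / (2 * (n : ℝ) - 2)) ≤
          ‖concatVec (y p) (τ • v p) - concatVec (y j) (τ • v j)‖) ∧
      (∃ p j, p ≠ j ∧
        ‖concatVec (y p) (τ • v p) - concatVec (y j) (τ • v j)‖ =
          0.81 * Real.sqrt 2 * Real.exp (-(3 : ℝ) / 2) / (((T : ℝ) + 1) * Ω) *
            (σ / mmin) ^ ((1 : ℝ) / (2 * (n : ℝ) - 2))) := by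
  obtain ⟨m, rfl⟩ : ∃ m, n = m + 2 := ⟨n - 2, by omega⟩
  have hm0 : (0:ℝ) < mmin := lt_trans hσ0 hσm
  set C : ℝ := 0.81 * Real.sqrt 2 * Real.exp (-(3:ℝ)/2) with hCdef
  have hs2pos : (0:ℝ) < Real.sqrt 2 := Real.sqrt_pos.2 (by norm_num)
  have hs2 : Real.sqrt 2 < 1.5 := by
    nlinarith [Real.sq_sqrt (by norm_num : (2:ℝ) ≥ 0)]
  have hexppos : (0:ℝ) < Real.exp (-(3:ℝ)/2) := Real.exp_pos _
  have hexple : Real.exp (-(3:ℝ)/2) ≤ 0.4 := by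
    have h1 : (3:ℝ)/2 + 1 ≤ Real.exp ((3:ℝ)/2) := Real.add_one_le_exp _
    have h2 : Real.exp (-(3:ℝ)/2) = (Real.exp ((3:ℝ)/2))⁻¹ := by
      rw [← Real.exp_neg]; norm_num
    rw [h2]
    rw [inv_le_comm₀ ((Real.exp_pos _)) (by norm_num)]
    linarith
  have hCpos : 0 < C := by positivity
  have hClt : C < 1/2 := by
    have : C ≤ 0.81 * 1.5 * 0.4 := by
      rw [hCdef]
      nlinarith
    linarith
  clear_value C
  set r : ℝ := (σ / mmin) ^ ((1:ℝ) / (2 * ((m+2 : ℕ) : ℝ) - 2)) with hrdef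
  have hq : 0 < σ/mmin := div_pos hσ0 hm0
  have hq1 : σ/mmin < 1 := (div_lt_one hm0).2 hσm
  have hden : (0:ℝ) < 2*((m+2:ℕ):ℝ) - 2 := by push_cast; nlinarith [Nat.cast_nonneg (α := ℝ) m]
  have hrpos : 0 < r := Real.rpow_pos_of_pos hq _
  have hr1 : r < 1 := Real.rpow_lt_one hq.le hq1 (by positivity)
  have hTpos : (0:ℝ) < (T:ℝ)+1 := by positivity
  clear_value r
  set h : ℝ := C / (((T:ℝ)+1)*Ω) * r with hhdef
  have hhpos : 0 < h := by positivity
  have hhΩ : ((T:ℝ)+1) * Ω * h = C * r := by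
    rw [hhdef]; field_simp
  clear_value h
  set c : ℝ := h/2 with hcdef
  have hcpos : 0 < c := by rw [hcdef]; positivity
  have h2c : h = 2*c := by rw [hcdef]; ring
  clear_value c
  set i0 : Fin d := ⟨0, hd⟩ with hi0
  set E : EuclideanSpace ℝ (Fin d) := EuclideanSpace.single i0 1 with hE
  have hEapp : ∀ x : ℝ, ((x • E) : EuclideanSpace ℝ (Fin d)) i0 = x := by
    intro x; rw [hE]; simp [EuclideanSpace.single_apply]
  have hEnorm : ∀ x : ℝ, ‖(x • E : EuclideanSpace ℝ (Fin d))‖ = |x| := by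
    intro x; rw [hE, norm_smul, EuclideanSpace.norm_single]; simp
  set w : ℕ → EuclideanSpace ℝ (Fin d) := fun k => ((k:ℝ) * c) • E with hw
  clear_value i0 E
  have hwinj : ∀ k1 k2 : ℕ, w k1 = w k2 → k1 = k2 := by
    intro k1 k2 hk
    have := congrArg (fun f => f i0) hk
    simp only [hw, hEapp] at this
    have h2 : (k1:ℝ) = k2 := mul_right_cancel₀ (ne_of_gt hcpos) this
    exact_mod_cast h2
  refine ⟨fun j => ((mmin * ((2*m+2).choose (2*(j:ℕ))) : ℝ) : ℂ),
    fun _ => 0, fun j => τ⁻¹ • w (2*(j:ℕ)),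
    fun k => ((mmin * ((2*m+2).choose (2*(k:ℕ)+1)) : ℝ) : ℂ),
    fun _ => 0, fun k => τ⁻¹ • w (2*(k:ℕ)+1), ?_, ?_, ?_, ?_, ?_, ?_, ?_, ?_⟩
  · intro j1 j2 hEq
    simp only [Prod.mk.injEq] at hEq
    have h3 : τ • τ⁻¹ • w (2*(j1:ℕ)) = τ • τ⁻¹ • w (2*(j2:ℕ)) := hEq.2.2
    rw [smul_inv_smul₀ hτ.ne', smul_inv_smul₀ hτ.ne'] at h3
    have := hwinj _ _ h3
    exact Fin.ext (by omega)
  · intro j1 j2 hEq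
    simp only [Prod.mk.injEq] at hEq
    have h3 : τ • τ⁻¹ • w (2*(j1:ℕ)+1) = τ • τ⁻¹ • w (2*(j2:ℕ)+1) := hEq.2.2
    rw [smul_inv_smul₀ hτ.ne', smul_inv_smul₀ hτ.ne'] at h3
    have := hwinj _ _ h3
    exact Fin.ext (by omega)
  · intro j1 j2 hEq
    have h3 : τ • τ⁻¹ • w (2*(j1:ℕ)) = τ • τ⁻¹ • w (2*(j2:ℕ)) := congrArg (τ • ·) hEq
    rw [smul_inv_smul₀ hτ.ne', smul_inv_smul₀ hτ.ne'] at h3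
    have := hwinj _ _ h3
    exact Fin.ext (by omega)
  · -- closeness
    intro t ht ω hω
    have hωi : |ω i0| ≤ Ω := by
      have h1 := abs_real_inner_le_norm E ω
      rw [hE, EuclideanSpace.inner_single_left, EuclideanSpace.norm_single] at h1
      simp only [map_one, one_mul, norm_one] at h1
      linarith
    set θ : ℝ := (t:ℝ) * (c * ω i0) with hθ
    clear_value θ
    set z : ℂ := Complex.exp (Complex.I * θ) with hz
    have hterm : ∀ k : ℕ,
        Complex.exp (Complex.I * ((inner ℝ ((0:EuclideanSpace ℝ (Fin d))
            + (t:ℝ) • τ • τ⁻¹ • w k) ω : ℝ) : ℂ)) = z ^ k := by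
      intro k
      rw [smul_inv_smul₀ hτ.ne', zero_add, hw, smul_smul, real_inner_smul_left, hE,
        EuclideanSpace.inner_single_left]
      simp only [map_one, one_mul]
      rw [hz, ← Complex.exp_nat_mul]
      congr 1
      rw [hθ]
      push_cast
      ring
    rw [show (∑ j : Fin (m+2-1), ((mmin * ((2*m+2).choose (2*(j:ℕ)+1)) : ℝ) : ℂ) *
          Complex.exp (Complex.I * ((inner ℝ ((0:EuclideanSpace ℝ (Fin d))
            + (t:ℝ) • τ • τ⁻¹ • w (2*(j:ℕ)+1)) ω : ℝ) : ℂ)))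
        = ∑ k ∈ Finset.range (m+1), ((mmin * ((2*m+2).choose (2*k+1)) : ℝ) : ℂ) * z^(2*k+1) by
      rw [← Fin.sum_univ_eq_sum_range (fun k =>
        ((mmin * ((2*m+2).choose (2*k+1)) : ℝ) : ℂ) * z^(2*k+1)) (m+1)]
      exact Finset.sum_congr rfl fun j _ => by rw [hterm]]
    rw [show (∑ j : Fin (m+2), ((mmin * ((2*m+2).choose (2*(j:ℕ))) : ℝ) : ℂ) *
          Complex.exp (Complex.I * ((inner ℝ ((0:EuclideanSpace ℝ (Fin d))
            + (t:ℝ) • τ • τ⁻¹ • w (2*(j:ℕ))) ω : ℝ) : ℂ)))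
        = ∑ j ∈ Finset.range (m+2), ((mmin * ((2*m+2).choose (2*j)) : ℝ) : ℂ) * z^(2*j) by
      rw [← Fin.sum_univ_eq_sum_range (fun j =>
        ((mmin * ((2*m+2).choose (2*j)) : ℝ) : ℂ) * z^(2*j)) (m+2)]
      exact Finset.sum_congr rfl fun j _ => by rw [hterm]]
    rw [key_alg m mmin z]
    rw [norm_neg, norm_mul, norm_pow, Complex.norm_real, Real.norm_eq_abs, abs_of_pos hm0]
    clear_value z
    have hθabs : |θ| ≤ (T:ℝ) * (c * Ω) := by
      rw [hθ, abs_mul, abs_mul]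
      have h1 : |(t:ℝ)| ≤ (T:ℝ) := by
        rw [abs_of_nonneg (Nat.cast_nonneg t)]; exact_mod_cast ht
      rw [abs_of_pos hcpos]
      exact mul_le_mul h1 (mul_le_mul_of_nonneg_left hωi hcpos.le) (by positivity)
        (Nat.cast_nonneg T)
    have hsmall : ‖Complex.I * (θ:ℂ)‖ ≤ 1 := by
      rw [norm_mul, Complex.norm_I, Complex.norm_real, Real.norm_eq_abs, one_mul]
      have hb1 : (T:ℝ) * (c * Ω) ≤ ((T:ℝ)+1) * Ω * h / 2 := by
        rw [h2c]; nlinarith [Nat.cast_nonneg (α := ℝ) T]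
      rw [hhΩ] at hb1
      have hcr : C * r ≤ C := mul_le_of_le_one_right hCpos.le hr1.le
      linarith
    have habs1z : ‖1 - z‖ ≤ 2 * |θ| := by
      have := Complex.norm_exp_sub_one_le hsmall
      rw [← hz] at this
      calc ‖1 - z‖ = ‖z - 1‖ := norm_sub_rev _ _
        _ ≤ 2 * ‖Complex.I * θ‖ := this
        _ = 2 * |θ| := by rw [norm_mul, Complex.norm_I, Complex.norm_real, Real.norm_eq_abs, one_mul]
    have hrp : r ^ (2*m+2) = σ/mmin := by
      rw [hrdef, ← Real.rpow_natCast ((σ/mmin) ^ ((1:ℝ) / (2 * ((m+2:ℕ):ℝ) - 2))) (2*m+2),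
        ← Real.rpow_mul hq.le]
      have hDK : (((2*m+2 : ℕ)):ℝ) = 2*((m+2:ℕ):ℝ) - 2 := by push_cast; ring
      rw [show (1:ℝ) / (2 * ((m+2:ℕ):ℝ) - 2) * ((2*m+2 : ℕ):ℝ) = 1 by
        rw [hDK, one_div, inv_mul_cancel₀ (ne_of_gt hden)]]
      exact Real.rpow_one _
    have hchain : mmin * ‖1 - z‖ ^ (2*m+2) < σ := by
      have h1 : ‖1-z‖ ^ (2*m+2) ≤ (2*|θ|) ^ (2*m+2) :=
        pow_le_pow_left₀ (norm_nonneg _) habs1z _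
      have h2 : (2*|θ|) ≤ (T:ℝ) * Ω * h := by
        rw [h2c]; nlinarith [abs_nonneg θ]
      have h3 : ((T:ℝ) * Ω * h) < C * r := by
        rw [← hhΩ]
        have : 0 < Ω * h := by positivity
        nlinarith
      have h4 : (2*|θ|) ^ (2*m+2) < (C*r) ^ (2*m+2) :=
        pow_lt_pow_left₀ (lt_of_le_of_lt h2 h3) (by positivity) (by omega)
      have h5 : (C*r)^(2*m+2) = C^(2*m+2) * (σ/mmin) := by
        rw [mul_pow, hrp]
      have h6 : C^(2*m+2) < 1 := pow_lt_one₀ hCpos.le (by linarith) (by omega)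
      calc mmin * ‖1-z‖ ^ (2*m+2)
          ≤ mmin * (2*|θ|)^(2*m+2) := mul_le_mul_of_nonneg_left h1 hm0.le
        _ < mmin * (C*r)^(2*m+2) := mul_lt_mul_of_pos_left h4 hm0
        _ = C^(2*m+2) * σ := by rw [h5]; field_simp
        _ < 1*σ := mul_lt_mul_of_pos_right h6 hσ0
        _ = σ := one_mul σ
    exact hchain
  · intro j
    rw [Complex.norm_real, Real.norm_eq_abs, abs_of_nonneg (by positivity)]
    have h1 : (1:ℝ) ≤ ((2*m+2).choose (2*(j:ℕ)) : ℝ) := by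
      have : 0 < (2*m+2).choose (2*(j:ℕ)) := Nat.choose_pos (by omega)
      exact_mod_cast this
    nlinarith
  · refine ⟨0, ?_⟩
    simp [Nat.choose_zero_right]
    linarith
  · intro p j hpj
    have hne : (p:ℕ) ≠ (j:ℕ) := fun hh => hpj (Fin.ext hh)
    rw [smul_inv_smul₀ hτ.ne', smul_inv_smul₀ hτ.ne', concat_sub_norm]
    rw [hw]
    rw [← sub_smul, ← sub_mul, hEnorm, abs_mul, abs_of_pos hcpos]
    have hz1 : 2 ≤ |((2*(p:ℕ):ℕ):ℝ) - ((2*(j:ℕ):ℕ):ℝ)| := by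
      have hzz : (2:ℤ) ≤ ((2*(p:ℕ):ℕ):ℤ) - ((2*(j:ℕ):ℕ):ℤ)
          ∨ (2:ℤ) ≤ ((2*(j:ℕ):ℕ):ℤ) - ((2*(p:ℕ):ℕ):ℤ) := by omega
      rcases hzz with h'|h'
      · exact le_abs.2 (Or.inl (by exact_mod_cast h'))
      · refine le_abs.2 (Or.inr ?_)
        have : (2:ℝ) ≤ ((2*(j:ℕ):ℕ):ℝ) - ((2*(p:ℕ):ℕ):ℝ) := by exact_mod_cast h'
        linarith
    have hfin : h ≤ |((2*(p:ℕ):ℕ):ℝ) - ((2*(j:ℕ):ℕ):ℝ)| * c := by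
      nlinarith
    exact hfin
  · refine ⟨1, 0, ?_, ?_⟩
    · intro hh
      have := congrArg Fin.val hh
      simp [Fin.val_one] at this
    · rw [smul_inv_smul₀ hτ.ne', smul_inv_smul₀ hτ.ne', concat_sub_norm, hw]
      rw [← sub_smul, ← sub_mul, hEnorm, abs_mul, abs_of_pos hcpos]
      have hv1 : ((1 : Fin (m+2)) : ℕ) = 1 := Fin.val_one _
      have hv0 : ((0 : Fin (m+2)) : ℕ) = 0 := rfl
      rw [hv1, hv0]
      norm_num
      linarith
end

section
/- (Proposition 2.7, worst-case for location–velocity recovery with equal velocities) For every d ≥ 1, integer n ≥ 2, Ω > 0, τ > 0, integer T ≥ 0 and reals 0 < σ < m_min, set Δ := (0.49 e^{−3/2}/Ω) · (σ/m_min)^{1/(2n−1)}. Then there exist amplitudes a_1,…,a_n, â_1,…,â_n ∈ ℂ and a common velocity v ∈ ℝ^d such that, with locations y_j := (−jΔ, 0, …, 0) ∈ ℝ^d and ŷ_j := ((j−1)Δ, 0, …, 0) ∈ ℝ^d for j = 1,…,n and all velocities equal to v, one has |Σ_{j=1}^n â_j exp(i(ŷ_j + t τ v)·ω) − Σ_{j=1}^n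 a_j exp(i(y_j + t τ v)·ω)| < σ for all ω ∈ ℝ^d with ‖ω‖₂ ≤ Ω and all t = 0,…,T; moreover either min_{1≤j≤n}|a_j| = m_min or min_{1≤j≤n}|â_j| = m_min. -/
lemma aux_abs_exp_I_sub_one (x : ℝ) : ‖(Complex.exp (Complex.I * x) - 1)‖ ≤ |x| := by
  have h : Complex.I * (x:ℂ) = (x:ℂ) * Complex.I := by ring
  rw [h]
  have hre : (Complex.exp ((x:ℂ) * Complex.I) - 1).re = Real.cos x - 1 := by
    simp [Complex.exp_ofReal_mul_I_re]
  have him : (Complex.exp ((x:ℂ) * Complex.I) - 1).im = Real.sin x := by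
    simp [Complex.exp_ofReal_mul_I_im]
  rw [Complex.norm_def, Complex.normSq_apply, hre, him, ← Real.sqrt_sq_eq_abs]
  apply Real.sqrt_le_sqrt
  nlinarith [Real.one_sub_sq_div_two_le_cos (x := x), Real.sin_sq_add_cos_sq x]

lemma aux_coord_le_norm {d : ℕ} (ω : EuclideanSpace ℝ (Fin d)) (i : Fin d) : |ω i| ≤ ‖ω‖ := by
  rw [EuclideanSpace.norm_eq, ← Real.sqrt_sq_eq_abs]
  apply Real.sqrt_le_sqrt
  have := Finset.single_le_sum (f := fun j => ‖ω j‖^2) (fun j _ => sq_nonneg _) (Finset.mem_univ i)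
  simpa [Real.norm_eq_abs, sq_abs] using this


/-- Proposition 2.7: worst-case example for location–velocity recovery with
equal velocities. -/
theorem worst_case_location_velocity_recovery_equal_velocities
    (d n T : ℕ) (hd : 1 ≤ d) (hn : 2 ≤ n)
    (Ω τ σ mmin : ℝ) (hΩ : 0 < Ω) (hτ : 0 < τ) (hσ0 : 0 < σ) (hσm : σ < mmin) :
    ∃ (a ahat : Fin n → ℂ) (v : EuclideanSpace ℝ (Fin d)),
      letI Δ : ℝ :=
        0.49 * Real.exp (-(3 : ℝ) / 2) / Ω * (σ / mmin) ^ ((1 : ℝ) / (2 * (n : ℝ) - 1))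
      letI y : Fin n → EuclideanSpace ℝ (Fin d) :=
        fun j => WithLp.toLp 2 (fun i : Fin d => if (i : ℕ) = 0 then -(((j : ℕ) : ℝ) + 1) * Δ else 0)
      letI yhat : Fin n → EuclideanSpace ℝ (Fin d) :=
        fun j => WithLp.toLp 2 (fun i : Fin d => if (i : ℕ) = 0 then ((j : ℕ) : ℝ) * Δ else 0)
      (∀ t ≤ T, ∀ ω : EuclideanSpace ℝ (Fin d), ‖ω‖ ≤ Ω →
        norm
          ((∑ j, ahat j * Complex.exp (Complex.I *
              ((inner ℝ (yhat j + (t : ℝ) • τ • v) ω : ℝ) : ℂ))) -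
           (∑ j, a j * Complex.exp (Complex.I *
              ((inner ℝ (y j + (t : ℝ) • τ • v) ω : ℝ) : ℂ)))) < σ) ∧
      (((∀ j, mmin ≤ norm (a j)) ∧ (∃ j, norm (a j) = mmin)) ∨
       ((∀ j, mmin ≤ norm (ahat j)) ∧ (∃ j, norm (ahat j) = mmin))) := by
  have hm0 : 0 < mmin := hσ0.trans hσm
  set m : ℕ := 2 * n - 1 with hm
  have hmd : m ≠ 0 := by omega
  set c : ℝ := 0.49 * Real.exp (-(3 : ℝ) / 2) with hc
  have hc0 : 0 < c := by positivity
  have hc1 : c < 1 := by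
    have h1 : Real.exp (-(3 : ℝ) / 2) < 1 := by
      rw [Real.exp_lt_one_iff]; norm_num
    nlinarith [Real.exp_pos (-(3:ℝ)/2)]
  set r : ℝ := (σ / mmin) ^ ((1 : ℝ) / (2 * (n : ℝ) - 1)) with hrdef
  have hx0 : (0:ℝ) < σ / mmin := by positivity
  have hr0 : 0 < r := Real.rpow_pos_of_pos hx0 _
  have hrm : r ^ m = σ / mmin := by
    rw [hrdef, ← Real.rpow_natCast ((σ/mmin) ^ ((1:ℝ)/(2*(n:ℝ)-1))) m,
      ← Real.rpow_mul hx0.le]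
    have hcast : (m:ℝ) = 2 * (n:ℝ) - 1 := by
      rw [hm]; push_cast [Nat.cast_sub (by omega : 1 ≤ 2 * n)]; ring
    have h2n : (2:ℝ) ≤ (n:ℝ) := by exact_mod_cast hn
    rw [hcast, one_div, inv_mul_cancel₀ (by nlinarith : 2*(n:ℝ)-1 ≠ 0) , Real.rpow_one]
  set Δ : ℝ := c / Ω * r with hΔdef
  have hΔ0 : 0 < Δ := by positivity
  have hΔΩ : Δ * Ω = c * r := by rw [hΔdef, div_mul_eq_mul_div, div_mul_cancel₀ _ hΩ.ne']
  clear_value c r Δ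
  refine ⟨fun j => -((-1:ℂ)^((n - 1 - (j:ℕ)) + m)) * mmin * (m.choose (n - 1 - (j:ℕ)) : ℂ),
          fun j => ((-1:ℂ)^((n + (j:ℕ)) + m)) * mmin * (m.choose (n + (j:ℕ)) : ℂ),
          0, ?_, ?_⟩
  · intro t ht ω hω
    simp only [smul_zero, add_zero]
    have hin : ∀ (cst : ℝ),
        (inner ℝ (WithLp.toLp 2 (fun i : Fin d => if (i:ℕ) = 0 then cst else 0) : EuclideanSpace ℝ (Fin d)) ω : ℝ)
          = cst * ω ⟨0, hd⟩ := by
      intro cst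
      rw [PiLp.inner_apply, Finset.sum_eq_single (⟨0, hd⟩ : Fin d)]
      · simp [mul_comm]
      · intro b _ hb
        have : (b:ℕ) ≠ 0 := fun h => hb (Fin.ext h)
        simp [this]
      · simp
    simp only [hin]
    set ω0 : ℝ := ω ⟨0, hd⟩ with hω0
    clear_value ω0
    set u : ℂ := Complex.exp (Complex.I * ((Δ * ω0 : ℝ) : ℂ)) with hu
    have hune : u ≠ 0 := Complex.exp_ne_zero _
    have habsu : ‖u‖ = 1 := by
      rw [hu, Complex.norm_exp]; simp
    -- rewrite exponentials
    have e1 : ∀ j : Fin n, Complex.exp (Complex.I * ((((j:ℕ):ℝ) * Δ * ω0 : ℝ) : ℂ))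
        = u ^ (j:ℕ) := by
      intro j
      rw [hu, ← Complex.exp_nat_mul]
      congr 1
      push_cast
      ring
    have e2 : ∀ j : Fin n, Complex.exp (Complex.I * ((-(((j:ℕ):ℝ) + 1) * Δ * ω0 : ℝ) : ℂ))
        = (u ^ ((j:ℕ) + 1))⁻¹ := by
      intro j
      rw [hu, ← Complex.exp_nat_mul, ← Complex.exp_neg]
      congr 1
      push_cast
      ring
    set S : ℂ := (∑ j : Fin n, ((-1:ℂ)^((n + (j:ℕ)) + m) * mmin * (m.choose (n + (j:ℕ)) : ℂ))
          * u ^ (j:ℕ)) -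
        ∑ j : Fin n, (-((-1:ℂ)^((n - 1 - (j:ℕ)) + m)) * mmin * (m.choose (n - 1 - (j:ℕ)) : ℂ))
          * (u ^ ((j:ℕ) + 1))⁻¹ with hS
    have hgoal : norm
        ((∑ j : Fin n, ((-1:ℂ)^((n + (j:ℕ)) + m) * mmin * (m.choose (n + (j:ℕ)) : ℂ))
            * Complex.exp (Complex.I * ((((j:ℕ):ℝ) * Δ * ω0 : ℝ) : ℂ))) -
         ∑ j : Fin n, (-((-1:ℂ)^((n - 1 - (j:ℕ)) + m)) * mmin * (m.choose (n - 1 - (j:ℕ)) : ℂ))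
            * Complex.exp (Complex.I * ((-(((j:ℕ):ℝ) + 1) * Δ * ω0 : ℝ) : ℂ))) = ‖S‖ := by
      rw [hS]
      congr 1
      congr 1
      · exact Finset.sum_congr rfl fun j _ => by rw [e1 j]
      · exact Finset.sum_congr rfl fun j _ => by rw [e2 j]
    rw [hgoal]
    -- key identity
    clear_value u
    have hA : ∑ j : Fin n, ((-1:ℂ)^((n + (j:ℕ)) + m) * mmin * (m.choose (n + (j:ℕ)) : ℂ))
          * u ^ (n + (j:ℕ))
        = (mmin:ℂ) * ∑ k ∈ Finset.range n,
            ((-1:ℂ)^((n+k) + m) * u^(n+k) * (1:ℂ)^(m-(n+k)) * ((m.choose (n+k) : ℕ) : ℂ)) := by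
      rw [Finset.mul_sum,
        ← Fin.sum_univ_eq_sum_range (fun k =>
          (mmin:ℂ) * ((-1:ℂ)^((n+k) + m) * u^(n+k) * (1:ℂ)^(m-(n+k)) * ((m.choose (n+k) : ℕ) : ℂ))) n]
      exact Finset.sum_congr rfl fun j _ => by rw [one_pow]; ring
    have hB : ∑ j : Fin n, (-((-1:ℂ)^((n - 1 - (j:ℕ)) + m)) * mmin * (m.choose (n - 1 - (j:ℕ)) : ℂ))
          * u ^ (n - 1 - (j:ℕ))
        = -((mmin:ℂ) * ∑ k ∈ Finset.range n,
            ((-1:ℂ)^(k + m) * u^k * (1:ℂ)^(m-k) * ((m.choose k : ℕ) : ℂ))) := by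
      rw [Finset.mul_sum,
        ← Finset.sum_range_reflect (fun k =>
          (mmin:ℂ) * ((-1:ℂ)^(k + m) * u^k * (1:ℂ)^(m-k) * ((m.choose k : ℕ) : ℂ))) n,
        ← Fin.sum_univ_eq_sum_range (fun k =>
          (mmin:ℂ) * ((-1:ℂ)^((n-1-k) + m) * u^(n-1-k) * (1:ℂ)^(m-(n-1-k)) * ((m.choose (n-1-k) : ℕ) : ℂ))) n,
        ← Finset.sum_neg_distrib]
      exact Finset.sum_congr rfl fun j _ => by rw [one_pow]; ring
    have hexpand : ((u:ℂ) - 1) ^ m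
        = (∑ k ∈ Finset.range n, ((-1:ℂ)^(k + m) * u^k * (1:ℂ)^(m-k) * ((m.choose k : ℕ) : ℂ)))
          + ∑ k ∈ Finset.range n,
            ((-1:ℂ)^((n+k) + m) * u^(n+k) * (1:ℂ)^(m-(n+k)) * ((m.choose (n+k) : ℕ) : ℂ)) := by
      rw [sub_pow, show m + 1 = n + n from by omega, Finset.sum_range_add]
    have hpowsplit : ∀ j : Fin n, u ^ n = u ^ (n - 1 - (j:ℕ)) * u ^ ((j:ℕ) + 1) := by
      intro j
      rw [← pow_add]
      congr 1
      omega
    have hkey : u ^ n * S = (mmin : ℂ) * (u - 1) ^ m := by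
      rw [hS, mul_sub, Finset.mul_sum, Finset.mul_sum]
      have t1 : ∀ j : Fin n,
          u ^ n * (((-1:ℂ)^((n + (j:ℕ)) + m) * mmin * (m.choose (n + (j:ℕ)) : ℂ)) * u ^ (j:ℕ))
          = ((-1:ℂ)^((n + (j:ℕ)) + m) * mmin * (m.choose (n + (j:ℕ)) : ℂ)) * u ^ (n + (j:ℕ)) := by
        intro j; rw [pow_add]; ring
      have t2 : ∀ j : Fin n,
          u ^ n * ((-((-1:ℂ)^((n - 1 - (j:ℕ)) + m)) * mmin * (m.choose (n - 1 - (j:ℕ)) : ℂ))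
            * (u ^ ((j:ℕ) + 1))⁻¹)
          = (-((-1:ℂ)^((n - 1 - (j:ℕ)) + m)) * mmin * (m.choose (n - 1 - (j:ℕ)) : ℂ))
            * u ^ (n - 1 - (j:ℕ)) := by
        intro j
        have h0 : (u ^ ((j:ℕ) + 1)) ≠ 0 := pow_ne_zero _ hune
        rw [hpowsplit j]
        field_simp
      rw [Finset.sum_congr rfl fun j _ => t1 j, Finset.sum_congr rfl fun j _ => t2 j,
        hA, hB, hexpand]
      ring
    have habsS : ‖S‖ = mmin * ‖u - 1‖ ^ m := by
      have : ‖u ^ n * S‖ = ‖S‖ := by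
        rw [norm_mul, norm_pow, habsu, one_pow, one_mul]
      rw [← this, hkey, norm_mul, norm_pow, Complex.norm_real, Real.norm_eq_abs, abs_of_pos hm0]
    rw [habsS]
    have hbound : ‖u - 1‖ ≤ Δ * Ω := by
      calc ‖u - 1‖ ≤ |Δ * ω0| := by
            rw [hu]; exact aux_abs_exp_I_sub_one (Δ * ω0)
        _ = Δ * |ω0| := by rw [abs_mul, abs_of_pos hΔ0]
        _ ≤ Δ * Ω := by
            have h1 : |ω0| ≤ ‖ω‖ := by rw [hω0]; exact aux_coord_le_norm ω _
            exact mul_le_mul_of_nonneg_left (h1.trans hω) hΔ0.le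
    calc mmin * ‖u - 1‖ ^ m
        ≤ mmin * (Δ * Ω) ^ m := by
          exact mul_le_mul_of_nonneg_left
            (pow_le_pow_left₀ (norm_nonneg _) hbound m) hm0.le
      _ = σ * c ^ m := by
          rw [hΔΩ, mul_pow, hrm]; field_simp
      _ < σ := by
          nlinarith [pow_lt_one₀ hc0.le hc1 hmd, pow_pos hc0 m]
  · left
    constructor
    · intro j
      have h1 : (1:ℝ) ≤ (m.choose (n - 1 - (j:ℕ)) : ℝ) := by
        exact_mod_cast Nat.one_le_iff_ne_zero.2 (Nat.choose_pos (by omega : n - 1 - (j:ℕ) ≤ m)).ne'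
      have : ‖(-((-1:ℂ)^((n - 1 - (j:ℕ)) + m)) * mmin * (m.choose (n - 1 - (j:ℕ)) : ℂ))‖
          = mmin * (m.choose (n - 1 - (j:ℕ)) : ℝ) := by
        simp [norm_mul, abs_of_pos hm0, Complex.norm_natCast]
      rw [this]
      nlinarith
    · refine ⟨⟨n - 1, by omega⟩, ?_⟩
      have : n - 1 - ((⟨n - 1, by omega⟩ : Fin n) : ℕ) = 0 := by simp
      simp [this, abs_of_pos hm0]
end

section
/- (Proposition 2.8, worst-case for location–velocity recovery with a long time window) For every d ≥ 1, integer n ≥ 2, Ω > 0, τ > 0, integer T ≥ 0 and reals 0 < σ < m_min, set Δ := (0.49 e^{−3/2}/((T+1)Ω)) · (σ/m_min)^{1/(2n−1)}. Then there exist amplitudes a_1,…,a_n, â_1,…,â_n ∈ ℂ such that, with concatenated location–velocity vectors α̂_j := (ŷ_j, τ v̂_j) = −(jΔ/√d)·(1,1,…,1) ∈ ℝ^{2d} for j = 1,…,n, and α_1 := (y_1, τ v_1) = 0, α_j := (y_j, τ v_j) = ((j−1)Δ/√d)·(1,1,…,1) ∈ ℝ^{2d} for j = 2,…,n (where (1,…,1)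 is the all-ones vector of ℝ^{2d}), one has |Σ_{j=1}^n â_j exp(i(ŷ_j + t τ v̂_j)·ω) − Σ_{j=1}^n a_j exp(i(y_j + t τ v_j)·ω)| < σ for all ω ∈ ℝ^d with ‖ω‖₂ ≤ Ω and all t = 0,…,T; moreover either min_{1≤j≤n}|a_j| = m_min or min_{1≤j≤n}|â_j| = m_min. -/
open Finset in
lemma poly_id (n : ℕ) (hn : 1 ≤ n) (c z : ℂ) :
    (∑ j : Fin n, ((-1:ℂ)^(n-1-(j:ℕ)) * ((2*n-1).choose (n-1-(j:ℕ))) * c) * z^(n-1-(j:ℕ)))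
      + ∑ j : Fin n, ((-1:ℂ)^(n+(j:ℕ)) * ((2*n-1).choose (n+(j:ℕ))) * c) * z^(n+(j:ℕ))
    = c * (1 - z)^(2*n-1) := by
  have h1 : (∑ j : Fin n, ((-1:ℂ)^(n-1-(j:ℕ)) * ((2*n-1).choose (n-1-(j:ℕ))) * c) * z^(n-1-(j:ℕ)))
      = ∑ k ∈ range n, ((-1:ℂ)^k * ((2*n-1).choose k) * c) * z^k := by
    rw [Fin.sum_univ_eq_sum_range (fun k => ((-1:ℂ)^(n-1-k) * ((2*n-1).choose (n-1-k)) * c) * z^(n-1-k)) n]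
    exact Finset.sum_range_reflect (fun k => ((-1:ℂ)^k * ((2*n-1).choose k) * c) * z^k) n
  have h2 : (∑ j : Fin n, ((-1:ℂ)^(n+(j:ℕ)) * ((2*n-1).choose (n+(j:ℕ))) * c) * z^(n+(j:ℕ)))
      = ∑ k ∈ range n, ((-1:ℂ)^(n+k) * ((2*n-1).choose (n+k)) * c) * z^(n+k) :=
    Fin.sum_univ_eq_sum_range (fun k => ((-1:ℂ)^(n+k) * ((2*n-1).choose (n+k)) * c) * z^(n+k)) n
  rw [h1, h2, ← Finset.sum_range_add (fun k => ((-1:ℂ)^k * ((2*n-1).choose k) * c) * z^k) n n]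
  have hnn : n + n = 2*n - 1 + 1 := by omega
  rw [hnn]
  rw [show (1 : ℂ) - z = -z + 1 by ring, add_pow]
  rw [Finset.mul_sum, Finset.sum_congr rfl]
  intro k hk
  rw [neg_pow]
  ring

open Finset in
lemma key_bound (n : ℕ) (hn : 1 ≤ n) (c : ℝ) (hc : 0 ≤ c) (s : ℝ) (hs : |s| ≤ 1) :
    norm (
      (∑ j : Fin n, ((-1:ℂ)^(n-1-(j:ℕ)) * ((2*n-1).choose (n-1-(j:ℕ))) * (c:ℂ)) *
          Complex.exp (Complex.I * ((-((((j:ℕ):ℝ)+1) * s) : ℝ) : ℂ)))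
      - ∑ j : Fin n, ((-1:ℂ)^(n+(j:ℕ)+1) * ((2*n-1).choose (n+(j:ℕ))) * (c:ℂ)) *
          Complex.exp (Complex.I * (((((j:ℕ):ℝ) * s : ℝ)) : ℂ)))
    ≤ c * (2*|s|)^(2*n-1) := by
  set z : ℂ := Complex.exp (Complex.I * (s:ℂ)) with hz
  set E : ℂ := Complex.exp ((n:ℂ) * (Complex.I * (s:ℂ))) with hE
  have hterm1 : ∀ j : Fin n,
      E * Complex.exp (Complex.I * ((-((((j:ℕ):ℝ)+1) * s) : ℝ) : ℂ)) = z ^ (n-1-(j:ℕ)) := by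
    intro j
    rw [hE, hz, ← Complex.exp_add, ← Complex.exp_nat_mul]
    congr 1
    have hj : (j:ℕ) + 1 ≤ n := j.isLt
    have h1 : n - 1 - (j:ℕ) = n - ((j:ℕ)+1) := by omega
    rw [h1, Nat.cast_sub hj]
    push_cast
    ring
  have hterm2 : ∀ j : Fin n,
      E * Complex.exp (Complex.I * (((((j:ℕ):ℝ) * s : ℝ)) : ℂ)) = z ^ (n+(j:ℕ)) := by
    intro j
    rw [hE, hz, ← Complex.exp_add, ← Complex.exp_nat_mul]
    congr 1
    push_cast
    ring
  have hED : E * ((∑ j : Fin n, ((-1:ℂ)^(n-1-(j:ℕ)) * ((2*n-1).choose (n-1-(j:ℕ))) * (c:ℂ)) *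
          Complex.exp (Complex.I * ((-((((j:ℕ):ℝ)+1) * s) : ℝ) : ℂ)))
      - ∑ j : Fin n, ((-1:ℂ)^(n+(j:ℕ)+1) * ((2*n-1).choose (n+(j:ℕ))) * (c:ℂ)) *
          Complex.exp (Complex.I * (((((j:ℕ):ℝ) * s : ℝ)) : ℂ)))
      = (c:ℂ) * (1 - z)^(2*n-1) := by
    rw [← poly_id n hn (c:ℂ) z, mul_sub, Finset.mul_sum, Finset.mul_sum,
      ← Finset.sum_sub_distrib, ← Finset.sum_add_distrib]
    apply Finset.sum_congr rfl
    intro j _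
    rw [show ∀ x y : ℂ, E * (x * y) = x * (E * y) by intros; ring,
      show ∀ x y : ℂ, E * (x * y) = x * (E * y) by intros; ring,
      hterm1 j, hterm2 j]
    ring
  have hEabs : norm E = 1 := by
    rw [hE, Complex.norm_exp]
    simp
  have habs : norm (1 - z) ≤ 2 * |s| := by
    rw [show (1 : ℂ) - z = -(z - 1) by ring, norm_neg]
    have h1 : norm (Complex.I * (s:ℂ)) = |s| := by
      simp
    calc norm (z - 1) ≤ 2 * norm (Complex.I * (s:ℂ)) :=
          Complex.norm_exp_sub_one_le (by rw [h1]; exact hs)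
      _ = 2 * |s| := by rw [h1]
  rw [show norm ((∑ j : Fin n, ((-1:ℂ)^(n-1-(j:ℕ)) * ((2*n-1).choose (n-1-(j:ℕ))) * (c:ℂ)) *
          Complex.exp (Complex.I * ((-((((j:ℕ):ℝ)+1) * s) : ℝ) : ℂ)))
      - ∑ j : Fin n, ((-1:ℂ)^(n+(j:ℕ)+1) * ((2*n-1).choose (n+(j:ℕ))) * (c:ℂ)) *
          Complex.exp (Complex.I * (((((j:ℕ):ℝ) * s : ℝ)) : ℂ)))
      = norm ((c:ℂ) * (1 - z)^(2*n-1)) by rw [← hED, norm_mul, hEabs, one_mul]]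
  calc norm ((c:ℂ) * (1 - z)^(2*n-1))
    _ = c * norm (1 - z)^(2*n-1) := by
        rw [norm_mul, norm_pow, Complex.norm_real, Real.norm_eq_abs, abs_of_nonneg hc]
    _ ≤ c * (2*|s|)^(2*n-1) := by
        apply mul_le_mul_of_nonneg_left _ hc
        exact pow_le_pow_left₀ (norm_nonneg _) habs _


/-- Proposition 2.8: worst-case example for location–velocity recovery over a
long time window.  Here `w j` and `what j` denote the scaled velocities `τ v_j`
and `τ v̂_j`, so that the concatenated location–velocity vectors are
`α_j = (y j, w j)` and `α̂_j = (yhat j, what j)`, all proportional to the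
all-ones vector. -/
theorem worst_case_location_velocity_recovery_long_window
    (d n T : ℕ) (hd : 1 ≤ d) (hn : 2 ≤ n)
    (Ω τ σ mmin : ℝ) (hΩ : 0 < Ω) (hτ : 0 < τ) (hσ0 : 0 < σ) (hσm : σ < mmin) :
    ∃ a ahat : Fin n → ℂ,
      letI Δ : ℝ :=
        0.49 * Real.exp (-(3 : ℝ) / 2) / (((T : ℝ) + 1) * Ω) *
          (σ / mmin) ^ ((1 : ℝ) / (2 * (n : ℝ) - 1))
      -- `α̂_j = (yhat j, what j) = −(jΔ/√d)·(1,…,1) ∈ ℝ^{2d}`, `j = 1,…,n`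
      letI yhat : Fin n → EuclideanSpace ℝ (Fin d) :=
        fun j => WithLp.toLp 2 (fun _ => -((((j : ℕ) : ℝ) + 1) * Δ / Real.sqrt d))
      letI what : Fin n → EuclideanSpace ℝ (Fin d) :=
        fun j => WithLp.toLp 2 (fun _ => -((((j : ℕ) : ℝ) + 1) * Δ / Real.sqrt d))
      -- `α_1 = 0` and `α_j = ((j−1)Δ/√d)·(1,…,1) ∈ ℝ^{2d}`, `j = 2,…,n`
      letI y : Fin n → EuclideanSpace ℝ (Fin d) :=
        fun j => WithLp.toLp 2 (fun _ => ((j : ℕ) : ℝ) * Δ / Real.sqrt d)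
      letI w : Fin n → EuclideanSpace ℝ (Fin d) :=
        fun j => WithLp.toLp 2 (fun _ => ((j : ℕ) : ℝ) * Δ / Real.sqrt d)
      (∀ t ≤ T, ∀ ω : EuclideanSpace ℝ (Fin d), ‖ω‖ ≤ Ω →
        norm
          ((∑ j, ahat j * Complex.exp (Complex.I *
              ((inner ℝ (yhat j + (t : ℝ) • what j) ω : ℝ) : ℂ))) -
           (∑ j, a j * Complex.exp (Complex.I *
              ((inner ℝ (y j + (t : ℝ) • w j) ω : ℝ) : ℂ)))) < σ) ∧
      (((∀ j, mmin ≤ norm (a j)) ∧ (∃ j, norm (a j) = mmin)) ∨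
       ((∀ j, mmin ≤ norm (ahat j)) ∧ (∃ j, norm (ahat j) = mmin))) := by
  have hm : 0 < mmin := hσ0.trans hσm
  refine ⟨fun j => (-1:ℂ)^(n+(j:ℕ)+1) * ((2*n-1).choose (n+(j:ℕ))) * (mmin:ℂ),
    fun j => (-1:ℂ)^(n-1-(j:ℕ)) * ((2*n-1).choose (n-1-(j:ℕ))) * (mmin:ℂ), ?_, ?_⟩
  · intro t ht ω hω
    set Δ : ℝ :=
        0.49 * Real.exp (-(3 : ℝ) / 2) / (((T : ℝ) + 1) * Ω) *
          (σ / mmin) ^ ((1 : ℝ) / (2 * (n : ℝ) - 1)) with hΔdef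
    set s : ℝ := (1 + (t:ℝ)) * (Δ / Real.sqrt d) * (∑ k, ω k) with hsdef
    simp only [PiLp.inner_apply, RCLike.inner_apply, conj_trivial, PiLp.add_apply,
      PiLp.smul_apply, smul_eq_mul, PiLp.toLp_apply]
    have h1 : ∀ j : Fin n, ∑ k : Fin d,
        (-((((j:ℕ):ℝ) + 1) * Δ / Real.sqrt d) + (t:ℝ) * -((((j:ℕ):ℝ) + 1) * Δ / Real.sqrt d)) * ω k
        = -((((j:ℕ):ℝ)+1) * s) := by
      intro j; rw [hsdef, ← Finset.mul_sum]; ring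
    have h2 : ∀ j : Fin n, ∑ k : Fin d,
        ((((j:ℕ):ℝ)) * Δ / Real.sqrt d + (t:ℝ) * ((((j:ℕ):ℝ)) * Δ / Real.sqrt d)) * ω k
        = (((j:ℕ):ℝ)) * s := by
      intro j; rw [hsdef, ← Finset.mul_sum]; ring
    have hc : ∀ k (x : ℝ), ω k * x = x * ω k := fun k x => mul_comm _ _
    simp only [hc, h1, h2]
    -- numeric facts
    have hd0 : (0:ℝ) < Real.sqrt d := Real.sqrt_pos.2 (by exact_mod_cast hd)
    have hn2 : (2:ℝ) ≤ (n:ℝ) := by exact_mod_cast hn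
    have hexp0 : (0:ℝ) < Real.exp (-(3:ℝ)/2) := Real.exp_pos _
    have hexp1 : Real.exp (-(3:ℝ)/2) ≤ 1 := by
      rw [Real.exp_le_one_iff]; norm_num
    have hb : (0:ℝ) ≤ σ/mmin := by positivity
    have hr0 : (0:ℝ) < (σ/mmin) ^ ((1:ℝ)/(2*(n:ℝ)-1)) :=
      Real.rpow_pos_of_pos (div_pos hσ0 hm) _
    have hr1 : (σ/mmin) ^ ((1:ℝ)/(2*(n:ℝ)-1)) ≤ 1 :=
      Real.rpow_le_one hb ((div_le_one hm).2 hσm.le) (div_nonneg (by norm_num) (by linarith))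
    have hΔpos : 0 < Δ := by rw [hΔdef]; positivity
    have hTΩ : ((T:ℝ)+1) * Ω ≠ 0 := by positivity
    have hCr : ((T:ℝ)+1) * Ω * Δ
        = (0.49 * Real.exp (-(3:ℝ)/2)) * ((σ/mmin) ^ ((1:ℝ)/(2*(n:ℝ)-1))) := by
      rw [hΔdef]; field_simp
    have hSω : |∑ k, ω k| ≤ Real.sqrt d * Ω := by
      set o : EuclideanSpace ℝ (Fin d) := WithLp.toLp 2 (fun _ => (1:ℝ)) with ho
      have hones : ‖o‖ = Real.sqrt d := by
        rw [EuclideanSpace.norm_eq]; simp [ho]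
      have h := abs_real_inner_le_norm o ω
      rw [hones] at h
      have h' : (inner ℝ o ω : ℝ) = ∑ k, ω k := by
        simp [PiLp.inner_apply, RCLike.inner_apply, ho]
      rw [h'] at h
      exact h.trans (mul_le_mul_of_nonneg_left hω (Real.sqrt_nonneg _))
    have hsabs : |s| ≤ (0.49 * Real.exp (-(3:ℝ)/2)) * ((σ/mmin) ^ ((1:ℝ)/(2*(n:ℝ)-1))) := by
      rw [hsdef, abs_mul, abs_mul]
      rw [abs_of_pos (show (0:ℝ) < 1 + (t:ℝ) by positivity),
        abs_of_pos (div_pos hΔpos hd0)]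
      calc (1 + (t:ℝ)) * (Δ / Real.sqrt d) * |∑ k, ω k|
          ≤ ((T:ℝ) + 1) * (Δ / Real.sqrt d) * (Real.sqrt d * Ω) := by
            have ht' : (t:ℝ) ≤ (T:ℝ) := by exact_mod_cast ht
            exact mul_le_mul (mul_le_mul_of_nonneg_right (by linarith)
              (div_pos hΔpos hd0).le) hSω (abs_nonneg _) (by positivity)
        _ = ((T:ℝ)+1) * Ω * Δ := by field_simp
        _ = _ := hCr
    have hs1 : |s| ≤ 1 := by nlinarith
    refine lt_of_le_of_lt (key_bound n (by omega) mmin hm.le s hs1) ?_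
    have hrpow : ((σ/mmin) ^ ((1:ℝ)/(2*(n:ℝ)-1))) ^ (2*n-1) = σ/mmin := by
      have hcast : ((2*n-1:ℕ):ℝ) = 2*(n:ℝ)-1 := by
        rw [Nat.cast_sub (by omega)]; push_cast; ring
      rw [← Real.rpow_natCast ((σ/mmin) ^ ((1:ℝ)/(2*(n:ℝ)-1))) (2*n-1),
        ← Real.rpow_mul hb, hcast]
      rw [show (1:ℝ)/(2*(n:ℝ)-1) * (2*(n:ℝ)-1) = 1 from one_div_mul_cancel (by linarith), Real.rpow_one]
    have h2C : 2 * (0.49 * Real.exp (-(3:ℝ)/2)) < 1 := by nlinarith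
    calc mmin * (2*|s|)^(2*n-1)
        ≤ mmin * (2*((0.49 * Real.exp (-(3:ℝ)/2)) * ((σ/mmin) ^ ((1:ℝ)/(2*(n:ℝ)-1)))))^(2*n-1) := by
          have : 2*|s| ≤ 2*((0.49 * Real.exp (-(3:ℝ)/2)) * ((σ/mmin) ^ ((1:ℝ)/(2*(n:ℝ)-1)))) := by linarith
          exact mul_le_mul_of_nonneg_left (pow_le_pow_left₀ (by positivity) this _) hm.le
      _ = (2:ℝ)^(2*n-1) * (0.49 * Real.exp (-(3:ℝ)/2))^(2*n-1) *
            (((σ/mmin) ^ ((1:ℝ)/(2*(n:ℝ)-1)))^(2*n-1)) * mmin := by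
          rw [mul_pow, mul_pow]; ring
      _ = (2:ℝ)^(2*n-1) * (0.49 * Real.exp (-(3:ℝ)/2))^(2*n-1) * σ := by
          rw [hrpow, mul_assoc, div_mul_cancel₀ σ (ne_of_gt hm)]
      _ < 1 * σ := by
          refine mul_lt_mul_of_pos_right ?_ hσ0
          rw [← mul_pow]
          exact pow_lt_one₀ (by positivity) h2C (by omega)
      _ = σ := one_mul σ
  · left
    have habs : ∀ j : Fin n,
        norm ((-1:ℂ)^(n+(j:ℕ)+1) * ((2*n-1).choose (n+(j:ℕ))) * (mmin:ℂ))
        = ((2*n-1).choose (n+(j:ℕ))) * mmin := by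
      intro j
      rw [norm_mul, norm_mul, norm_pow, norm_neg, norm_one, one_pow, one_mul,
        Complex.norm_natCast, Complex.norm_real, Real.norm_eq_abs, abs_of_pos hm]
    constructor
    · intro j
      rw [habs j]
      have h1 : 1 ≤ (((2*n-1).choose (n+(j:ℕ)) : ℕ) : ℝ) := by
        have := Nat.choose_pos (show n+(j:ℕ) ≤ 2*n-1 by omega)
        exact_mod_cast this
      nlinarith
    · refine ⟨⟨n-1, by omega⟩, ?_⟩
      rw [habs]
      norm_num
      rw [show n + (n-1) = 2*n-1 by omega, Nat.choose_self]
      norm_num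
end

section
/- (Lemma 7.2, angle between the subspaces S_t^d) Let d ≥ 1 and let j < t be nonnegative integers. For any nonzero vector q_t ∈ S_t^d and any nonzero vector q_j ∈ S_j^d with ⟨q_t, q_j⟩ ≥ 0, the angle ∠(q_t, q_j) := arccos(⟨q_t, q_j⟩/(‖q_t‖₂‖q_j‖₂)) satisfies Σ_{k=j+1}^{t} 1/(1+k²) < ∠(q_t, q_j) ≤ π/2. -/
/-- The linear embedding `v ↦ (v, t v)` of `ℝ^d` into `ℝ^{2d}`. -/
noncomputable def Smap (d : ℕ) (t : ℝ) :
    EuclideanSpace ℝ (Fin d) →ₗ[ℝ] EuclideanSpace ℝ (Fin d ⊕ Fin d) where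
  toFun v := concatVec v (t • v)
  map_add' u w := by
    ext i
    cases i with
    | inl i => rfl
    | inr i =>
      show t * (u i + w i) = t * u i + t * w i
      ring
  map_smul' c v := by
    ext i
    cases i with
    | inl i => rfl
    | inr i =>
      show t * (c * v i) = c * (t * v i)
      ring

/-- The subspace `S_t^d = {(v, t v) : v ∈ ℝ^d}` of `ℝ^{2d}`. -/
noncomputable def Ssub (d : ℕ) (t : ℝ) : Submodule ℝ (EuclideanSpace ℝ (Fin d ⊕ Fin d)) :=
  LinearMap.range (Smap d t)

lemma inner_Smap (d : ℕ) (s r : ℝ) (v w : EuclideanSpace ℝ (Fin d)) :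
    (inner ℝ (Smap d s v) (Smap d r w) : ℝ) = (1 + s * r) * (inner ℝ v w : ℝ) := by
  simp only [Smap, LinearMap.coe_mk, AddHom.coe_mk, concatVec, PiLp.inner_apply,
    RCLike.inner_apply, conj_trivial, Fintype.sum_sum_type, Sum.elim_inl, Sum.elim_inr,
    PiLp.smul_apply, smul_eq_mul]
  rw [add_mul, one_mul, Finset.mul_sum]
  congr 1
  exact Finset.sum_congr rfl fun i _ => by ring

lemma norm_Smap (d : ℕ) (s : ℝ) (v : EuclideanSpace ℝ (Fin d)) :
    ‖Smap d s v‖ = Real.sqrt (1 + s ^ 2) * ‖v‖ := by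
  have h := real_inner_self_eq_norm_sq (Smap d s v)
  rw [inner_Smap, real_inner_self_eq_norm_sq] at h
  have : ‖(Smap d s) v‖ = Real.sqrt ((1 + s * s) * ‖v‖ ^ 2) := by
    rw [h, Real.sqrt_sq (norm_nonneg _)]
  rw [this, Real.sqrt_mul (by nlinarith), Real.sqrt_sq (norm_nonneg _)]
  ring_nf

open Real

lemma arctan_gap (k : ℕ) (hk : 1 ≤ k) :
    1 / (1 + (k : ℝ) ^ 2) < arctan k - arctan ((k : ℝ) - 1) := by
  have hk1 : (1 : ℝ) ≤ k := by exact_mod_cast hk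
  obtain ⟨c, hc, hEq⟩ := exists_hasDerivAt_eq_slope arctan (fun x => 1 / (1 + x ^ 2))
    (show (k : ℝ) - 1 < k by linarith) (Real.continuous_arctan.continuousOn)
    (fun x _ => Real.hasDerivAt_arctan x)
  have hden : (k : ℝ) - ((k : ℝ) - 1) = 1 := by ring
  rw [hden, div_one] at hEq
  rw [← hEq]
  have hc0 : 0 ≤ c := le_trans (by linarith) hc.1.le
  have hcsq : c ^ 2 < (k : ℝ) ^ 2 := by nlinarith [hc.2]
  apply one_div_lt_one_div_of_lt (by positivity) (by linarith)

lemma tele (g : ℕ → ℝ) (j t : ℕ) (h : j ≤ t) :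
    ∑ k ∈ Finset.Icc (j + 1) t, (g k - g (k - 1)) = g t - g j := by
  induction t, h using Nat.le_induction with
  | base => simp
  | succ t ht ih =>
    rw [Finset.sum_Icc_succ_top (by omega), ih]
    simp only [Nat.add_sub_cancel]
    ring

lemma arccos_anti {x y : ℝ} (h : x ≤ y) : arccos y ≤ arccos x := by
  unfold Real.arccos
  have := Real.monotone_arcsin h
  linarith

lemma arccos_of_pair (j t : ℕ) (hjt : j < t) :
    arccos ((1 + (t:ℝ) * j) / (Real.sqrt (1 + (t:ℝ)^2) * Real.sqrt (1 + (j:ℝ)^2)))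
      = arctan t - arctan j := by
  have hA : (0:ℝ) < Real.sqrt (1 + (t:ℝ)^2) := Real.sqrt_pos.2 (by positivity)
  have hB : (0:ℝ) < Real.sqrt (1 + (j:ℝ)^2) := Real.sqrt_pos.2 (by positivity)
  have hmono : arctan (j:ℝ) ≤ arctan (t:ℝ) :=
    (Real.arctan_strictMono.le_iff_le).2 (by exact_mod_cast hjt.le)
  have h1 : 0 ≤ arctan (t:ℝ) - arctan (j:ℝ) := by linarith
  have h2 : arctan (t:ℝ) - arctan (j:ℝ) ≤ π := by
    have := Real.arctan_lt_pi_div_two (t:ℝ)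
    have := Real.neg_pi_div_two_lt_arctan (j:ℝ)
    linarith
  have hcos : Real.cos (arctan (t:ℝ) - arctan (j:ℝ))
      = (1 + (t:ℝ) * j) / (Real.sqrt (1 + (t:ℝ)^2) * Real.sqrt (1 + (j:ℝ)^2)) := by
    rw [Real.cos_sub, Real.cos_arctan, Real.sin_arctan, Real.cos_arctan, Real.sin_arctan]
    field_simp
  rw [← hcos, Real.arccos_cos h1 h2]

/-- Lemma 7.2: the angle between nonzero vectors of `S_t^d` and `S_j^d` (for
`j < t`) with nonnegative inner product lies in
`(Σ_{k=j+1}^t 1/(1+k²), π/2]`. -/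
theorem angle_between_Std_subspaces
    (d : ℕ) (hd : 1 ≤ d) (j t : ℕ) (hjt : j < t)
    (qt qj : EuclideanSpace ℝ (Fin d ⊕ Fin d))
    (hqt : qt ∈ Ssub d (t : ℝ)) (hqj : qj ∈ Ssub d (j : ℝ))
    (hqt0 : qt ≠ 0) (hqj0 : qj ≠ 0)
    (hip : 0 ≤ (inner ℝ qt qj : ℝ)) :
    (Finset.sum (Finset.Icc (j + 1) t) (fun k => (1 : ℝ) / (1 + (k : ℝ) ^ 2))) <
        Real.arccos ((inner ℝ qt qj : ℝ) / (‖qt‖ * ‖qj‖)) ∧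
      Real.arccos ((inner ℝ qt qj : ℝ) / (‖qt‖ * ‖qj‖)) ≤ Real.pi / 2 := by
  obtain ⟨v, rfl⟩ := hqt
  obtain ⟨w, rfl⟩ := hqj
  have hv0 : v ≠ 0 := fun h => hqt0 (by rw [h, map_zero])
  have hw0 : w ≠ 0 := fun h => hqj0 (by rw [h, map_zero])
  have hnv : 0 < ‖v‖ := norm_pos_iff.2 hv0
  have hnw : 0 < ‖w‖ := norm_pos_iff.2 hw0
  rw [inner_Smap, norm_Smap, norm_Smap] at *
  set A := Real.sqrt (1 + (t:ℝ)^2) with hAdef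
  set B := Real.sqrt (1 + (j:ℝ)^2) with hBdef
  have hA : (0:ℝ) < A := Real.sqrt_pos.2 (by positivity)
  have hB : (0:ℝ) < B := Real.sqrt_pos.2 (by positivity)
  have htj : (0:ℝ) < 1 + (t:ℝ) * (j:ℝ) := by positivity
  have hivw : 0 ≤ (inner ℝ v w : ℝ) :=
    le_of_mul_le_mul_left (by rw [mul_zero]; exact hip) htj
  have hr0 : 0 ≤ (1 + (t:ℝ) * j) * (inner ℝ v w : ℝ) / (A * ‖v‖ * (B * ‖w‖)) :=
    div_nonneg hip (by positivity)
  have hrc : (1 + (t:ℝ) * j) * (inner ℝ v w : ℝ) / (A * ‖v‖ * (B * ‖w‖))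
      ≤ (1 + (t:ℝ) * j) / (A * B) := by
    rw [div_le_div_iff₀ (by positivity) (by positivity)]
    have key : (inner ℝ v w : ℝ) ≤ ‖v‖ * ‖w‖ := real_inner_le_norm v w
    nlinarith [mul_le_mul_of_nonneg_left key (le_of_lt (mul_pos htj (mul_pos hA hB)))]
  constructor
  · have hsum : (Finset.sum (Finset.Icc (j + 1) t) (fun k => (1 : ℝ) / (1 + (k : ℝ) ^ 2)))
        < arctan t - arctan j := by
      rw [← tele (fun k => arctan (k:ℝ)) j t hjt.le]
      apply Finset.sum_lt_sum_of_nonempty (Finset.nonempty_Icc.2 (by omega))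
      intro k hk
      have hk1 : 1 ≤ k := by
        simp only [Finset.mem_Icc] at hk; omega
      have h := arctan_gap k hk1
      have hcast : ((k - 1 : ℕ) : ℝ) = (k:ℝ) - 1 := by
        rw [Nat.cast_sub hk1, Nat.cast_one]
      simp only [hcast]
      exact h
    calc _ < arctan t - arctan j := hsum
      _ = arccos ((1 + (t:ℝ) * j) / (A * B)) := (arccos_of_pair j t hjt).symm
      _ ≤ _ := arccos_anti hrc
  · exact Real.arccos_le_pi_div_two.2 hr0
end

section
/- (Lemma 7.3, projections onto the subspaces S_t^d) Let d ≥ 1, let t ≥ 0 be an integer and let u ∈ ℝ^{2d}. If ‖P_{S_t^d}(u)‖₂ < ‖u‖₂/(2π(1+t²)), then for every integer j with 0 ≤ j < t one has ‖P_{S_j^d}(u)‖₂ ≥ ‖u‖₂/(2π(1+j²)). -/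
noncomputable def zvec (d : ℕ) (t : ℝ) (u : EuclideanSpace ℝ (Fin d ⊕ Fin d)) :
    EuclideanSpace ℝ (Fin d) := WithLp.toLp 2 (fun i => u (Sum.inl i) + t * u (Sum.inr i))

lemma key_lemma (d : ℕ) (t : ℝ) (u : EuclideanSpace ℝ (Fin d ⊕ Fin d)) :
    ‖zvec d t u‖ ≤
      Real.sqrt (1 + t ^ 2) *
        ‖((Ssub d t).orthogonalProjection u : EuclideanSpace ℝ (Fin d ⊕ Fin d))‖ := by
  set z : EuclideanSpace ℝ (Fin d) := zvec d t u with hz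
  have hzapp : ∀ i, z i = u (Sum.inl i) + t * u (Sum.inr i) := fun i => rfl
  set s : EuclideanSpace ℝ (Fin d ⊕ Fin d) := Smap d t z with hsdef
  have hs : s ∈ Ssub d t := ⟨z, rfl⟩
  have hus : inner ℝ u s = ‖z‖ ^ 2 := by
    rw [PiLp.inner_apply]
    have : (‖z‖ : ℝ) ^ 2 = inner ℝ z z := (real_inner_self_eq_norm_sq z).symm
    rw [this, PiLp.inner_apply]
    rw [Fintype.sum_sum_type]
    simp only [RCLike.inner_apply, conj_trivial]
    have : ∀ i : Fin d, s (Sum.inl i) = z i := fun i => rfl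
    have h2 : ∀ i : Fin d, s (Sum.inr i) = t * z i := fun i => rfl
    simp only [this, h2]
    rw [← Finset.sum_add_distrib]
    congr 1; funext i; (try simp only [hzapp]); ring
  have hss : ‖s‖ ^ 2 = (1 + t ^ 2) * ‖z‖ ^ 2 := by
    rw [← real_inner_self_eq_norm_sq, ← real_inner_self_eq_norm_sq,
      PiLp.inner_apply, PiLp.inner_apply, Fintype.sum_sum_type]
    simp only [RCLike.inner_apply, conj_trivial]
    have h1 : ∀ i : Fin d, s (Sum.inl i) = z i := fun i => rfl
    have h2 : ∀ i : Fin d, s (Sum.inr i) = t * z i := fun i => rfl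
    simp only [h1, h2]
    rw [← Finset.sum_add_distrib, Finset.mul_sum]
    congr 1; funext i; (try simp only [hzapp]); ring
  have hnorms : ‖s‖ = Real.sqrt (1 + t ^ 2) * ‖z‖ := by
    have h1 : (0:ℝ) ≤ 1 + t ^ 2 := by positivity
    calc ‖s‖ = Real.sqrt (‖s‖ ^ 2) := (Real.sqrt_sq (norm_nonneg s)).symm
      _ = Real.sqrt ((1 + t ^ 2) * ‖z‖ ^ 2) := by rw [hss]
      _ = Real.sqrt (1 + t ^ 2) * Real.sqrt (‖z‖ ^ 2) := Real.sqrt_mul h1 _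
      _ = Real.sqrt (1 + t ^ 2) * ‖z‖ := by rw [Real.sqrt_sq (norm_nonneg z)]
  have hproj : (inner ℝ (((Ssub d t).orthogonalProjection u : EuclideanSpace ℝ (Fin d ⊕ Fin d))) s : ℝ)
      = inner ℝ u s := by
    have h0 : inner ℝ (u - ((Ssub d t).orthogonalProjection u : EuclideanSpace ℝ (Fin d ⊕ Fin d))) s = 0 :=
      (Ssub d t).starProjection_inner_eq_zero u s hs
    have := inner_sub_left (𝕜 := ℝ) u (((Ssub d t).orthogonalProjection u : EuclideanSpace ℝ (Fin d ⊕ Fin d))) s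
    rw [h0] at this
    linarith
  have hle : ‖z‖ ^ 2 ≤ ‖((Ssub d t).orthogonalProjection u : EuclideanSpace ℝ (Fin d ⊕ Fin d))‖ * ‖s‖ := by
    calc ‖z‖ ^ 2 = (inner ℝ (((Ssub d t).orthogonalProjection u : EuclideanSpace ℝ (Fin d ⊕ Fin d))) s : ℝ) := by
          rw [hproj, hus]
      _ ≤ ‖((Ssub d t).orthogonalProjection u : EuclideanSpace ℝ (Fin d ⊕ Fin d))‖ * ‖s‖ :=
          real_inner_le_norm _ _
  rcases eq_or_lt_of_le (norm_nonneg z) with hz0 | hz0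
  · have : (0:ℝ) ≤ Real.sqrt (1 + t ^ 2) *
        ‖((Ssub d t).orthogonalProjection u : EuclideanSpace ℝ (Fin d ⊕ Fin d))‖ :=
      mul_nonneg (Real.sqrt_nonneg _) (norm_nonneg _)
    calc ‖z‖ = 0 := hz0.symm
      _ ≤ _ := this
  · rw [hnorms] at hle
    nlinarith [Real.sqrt_nonneg (1 + t ^ 2),
      norm_nonneg (((Ssub d t).orthogonalProjection u : EuclideanSpace ℝ (Fin d ⊕ Fin d)))]

noncomputable def yvec (d : ℕ) (u : EuclideanSpace ℝ (Fin d ⊕ Fin d)) :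
    EuclideanSpace ℝ (Fin d) := WithLp.toLp 2 (fun i => u (Sum.inl i))

noncomputable def wvec (d : ℕ) (u : EuclideanSpace ℝ (Fin d ⊕ Fin d)) :
    EuclideanSpace ℝ (Fin d) := WithLp.toLp 2 (fun i => u (Sum.inr i))

lemma norm_decomp (d : ℕ) (u : EuclideanSpace ℝ (Fin d ⊕ Fin d)) :
    ‖u‖ ^ 2 = ‖yvec d u‖ ^ 2 + ‖wvec d u‖ ^ 2 := by
  rw [← real_inner_self_eq_norm_sq, ← real_inner_self_eq_norm_sq, ← real_inner_self_eq_norm_sq,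
    PiLp.inner_apply, PiLp.inner_apply, PiLp.inner_apply, Fintype.sum_sum_type]
  rfl

lemma zvec_sub (d : ℕ) (s t : ℝ) (u : EuclideanSpace ℝ (Fin d ⊕ Fin d)) :
    zvec d t u - zvec d s u = (t - s) • wvec d u := by
  ext i
  show (u (Sum.inl i) + t * u (Sum.inr i)) - (u (Sum.inl i) + s * u (Sum.inr i))
      = (t - s) * u (Sum.inr i)
  ring

lemma yvec_eq (d : ℕ) (t : ℝ) (u : EuclideanSpace ℝ (Fin d ⊕ Fin d)) :
    yvec d u = zvec d t u - t • wvec d u := by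
  ext i
  show u (Sum.inl i) = (u (Sum.inl i) + t * u (Sum.inr i)) - t * u (Sum.inr i)
  ring


lemma final_contra (p u jr : ℝ) (hpi : 3 < p) (hU2 : 0 < u ^ 2) (hj0 : 0 ≤ jr)
    (hfinal : u ^ 2 * (4 * p ^ 2 * (1 + jr ^ 2)) < ((1 + 2 * jr) ^ 2 + 4) * u ^ 2) :
    False := by
  have hpi2 : (9:ℝ) < p ^ 2 := by nlinarith
  nlinarith [mul_nonneg (sq_nonneg (8 * jr - 1)) hU2.le, mul_nonneg hj0 hU2.le,
    mul_nonneg (mul_nonneg (sq_nonneg jr) hU2.le) (by linarith : (0:ℝ) ≤ p ^ 2 - 9),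
    mul_nonneg hU2.le (by linarith : (0:ℝ) ≤ p ^ 2 - 9)]

set_option maxHeartbeats 1000000 in
/-- Lemma 7.3: if the projection of `u` onto `S_t^d` is small then its
projection onto every earlier `S_j^d` is large. -/
theorem projection_onto_Std_subspaces
    (d : ℕ) (hd : 1 ≤ d) (t : ℕ) (u : EuclideanSpace ℝ (Fin d ⊕ Fin d))
    (h : ‖((Ssub d (t : ℝ)).orthogonalProjection u : EuclideanSpace ℝ (Fin d ⊕ Fin d))‖ <
      ‖u‖ / (2 * Real.pi * (1 + (t : ℝ) ^ 2))) :
    ∀ j : ℕ, j < t →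
      ‖u‖ / (2 * Real.pi * (1 + (j : ℝ) ^ 2)) ≤
        ‖((Ssub d (j : ℝ)).orthogonalProjection u : EuclideanSpace ℝ (Fin d ⊕ Fin d))‖ := by
  intro j hj
  by_contra hcon
  push_neg at hcon
  have hpi : (3:ℝ) < Real.pi := Real.pi_gt_three
  set U := ‖u‖ with hU
  set Pt := ‖((Ssub d (t : ℝ)).orthogonalProjection u : EuclideanSpace ℝ (Fin d ⊕ Fin d))‖ with hPt
  set Pj := ‖((Ssub d (j : ℝ)).orthogonalProjection u : EuclideanSpace ℝ (Fin d ⊕ Fin d))‖ with hPj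
  have hPt0 : 0 ≤ Pt := norm_nonneg _
  have hPj0 : 0 ≤ Pj := norm_nonneg _
  have hDt : (0:ℝ) < 2 * Real.pi * (1 + (t : ℝ) ^ 2) := by positivity
  have hDj : (0:ℝ) < 2 * Real.pi * (1 + (j : ℝ) ^ 2) := by positivity
  have hU0 : 0 < U := by
    rcases (lt_or_ge 0 U) with h' | h'
    · exact h'
    · exfalso
      have hU0' : U = 0 := le_antisymm h' (norm_nonneg u)
      rw [hU0'] at h
      simp at h
      linarith
  -- basic sqrt facts
  set A := Real.sqrt (1 + (j : ℝ) ^ 2) with hA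
  set B := Real.sqrt (1 + (t : ℝ) ^ 2) with hB
  have hA2 : A ^ 2 = 1 + (j : ℝ) ^ 2 := Real.sq_sqrt (by positivity)
  have hB2 : B ^ 2 = 1 + (t : ℝ) ^ 2 := Real.sq_sqrt (by positivity)
  have hA0 : 0 ≤ A := Real.sqrt_nonneg _
  have hB0 : 0 ≤ B := Real.sqrt_nonneg _
  have hA1 : 1 ≤ A := by nlinarith [sq_nonneg ((j:ℝ))]
  have hAB : A ≤ B := by
    apply Real.sqrt_le_sqrt
    have : (j:ℝ) ≤ (t:ℝ) := by exact_mod_cast hj.le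
    nlinarith [Nat.cast_nonneg (α := ℝ) j]
  -- key lemma applications
  set Zt := ‖zvec d (t : ℝ) u‖ with hZt
  set Zj := ‖zvec d (j : ℝ) u‖ with hZj
  have hZt0 : 0 ≤ Zt := norm_nonneg _
  have hZj0 : 0 ≤ Zj := norm_nonneg _
  have k1 : Zt ≤ B * Pt := key_lemma d (t : ℝ) u
  have k2 : Zj ≤ A * Pj := key_lemma d (j : ℝ) u
  have hPt' : Pt * (2 * Real.pi * (1 + (t : ℝ) ^ 2)) < U := (lt_div_iff₀ hDt).mp h
  have hPj' : Pj * (2 * Real.pi * (1 + (j : ℝ) ^ 2)) < U := (lt_div_iff₀ hDj).mp hcon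
  -- scaled bounds
  have st : Zt * (2 * Real.pi * B) < U := by
    have h1 : Zt * (2 * Real.pi * B) ≤ B * Pt * (2 * Real.pi * B) := by
      have : (0:ℝ) ≤ 2 * Real.pi * B := by positivity
      exact mul_le_mul_of_nonneg_right k1 this
    have h2 : B * Pt * (2 * Real.pi * B) = Pt * (2 * Real.pi * (1 + (t : ℝ) ^ 2)) := by
      rw [← hB2]; ring
    linarith
  have sj : Zj * (2 * Real.pi * A) < U := by
    have h1 : Zj * (2 * Real.pi * A) ≤ A * Pj * (2 * Real.pi * A) := by
      have : (0:ℝ) ≤ 2 * Real.pi * A := by positivity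
      exact mul_le_mul_of_nonneg_right k2 this
    have h2 : A * Pj * (2 * Real.pi * A) = Pj * (2 * Real.pi * (1 + (j : ℝ) ^ 2)) := by
      rw [← hA2]; ring
    linarith
  have st' : Zt * (2 * Real.pi * A) < U := by
    have : Zt * (2 * Real.pi * A) ≤ Zt * (2 * Real.pi * B) := by
      apply mul_le_mul_of_nonneg_left _ hZt0
      nlinarith [Real.pi_pos]
    linarith
  -- vector norm relations
  set W := ‖wvec d u‖ with hW
  set Y := ‖yvec d u‖ with hY
  have hW0 : 0 ≤ W := norm_nonneg _
  have hY0 : 0 ≤ Y := norm_nonneg _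
  have htj : (1:ℝ) ≤ (t:ℝ) - (j:ℝ) := by
    have : (j:ℝ) + 1 ≤ (t:ℝ) := by exact_mod_cast hj
    linarith
  have hWle : W ≤ Zt + Zj := by
    have h1 : ‖zvec d (t:ℝ) u - zvec d (j:ℝ) u‖ = ((t:ℝ) - (j:ℝ)) * W := by
      rw [zvec_sub, norm_smul, Real.norm_eq_abs, abs_of_nonneg (by linarith)]
    have h2 : ‖zvec d (t:ℝ) u - zvec d (j:ℝ) u‖ ≤ Zt + Zj := norm_sub_le _ _
    have h3 : 1 * W ≤ ((t:ℝ) - (j:ℝ)) * W := mul_le_mul_of_nonneg_right htj hW0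
    rw [one_mul] at h3
    linarith
  have hYle : Y ≤ Zj + (j:ℝ) * W := by
    have h1 : Y ≤ Zj + ‖((j:ℝ)) • wvec d u‖ := by
      rw [hY, yvec_eq d (j:ℝ) u]
      exact norm_sub_le _ _
    have h2 : ‖((j:ℝ)) • wvec d u‖ = (j:ℝ) * W := by
      rw [norm_smul, Real.norm_eq_abs, abs_of_nonneg (Nat.cast_nonneg j)]
    linarith
  have hu2 : U ^ 2 = Y ^ 2 + W ^ 2 := norm_decomp d u
  -- combine
  have hj0 : (0:ℝ) ≤ (j:ℝ) := Nat.cast_nonneg j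
  have hposA : (0:ℝ) < 2 * Real.pi * A := by positivity
  have hWb : W * (2 * Real.pi * A) < 2 * U := by
    have h1 := mul_le_mul_of_nonneg_right hWle hposA.le
    linarith [h1, st', sj]
  have hYb : Y * (2 * Real.pi * A) < (1 + 2 * (j:ℝ)) * U := by
    have h1 : Y * (2 * Real.pi * A) ≤
        Zj * (2 * Real.pi * A) + (j:ℝ) * (W * (2 * Real.pi * A)) := by
      have := mul_le_mul_of_nonneg_right hYle hposA.le
      linarith [this]
    have h2 : (j:ℝ) * (W * (2 * Real.pi * A)) ≤ (j:ℝ) * (2 * U) :=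
      mul_le_mul_of_nonneg_left hWb.le hj0
    linarith [h1, h2, sj]
  -- square and sum
  have hsqW : (W * (2 * Real.pi * A)) ^ 2 < (2 * U) ^ 2 :=
    pow_lt_pow_left₀ hWb (by positivity) (by norm_num)
  have hsqY : (Y * (2 * Real.pi * A)) ^ 2 < ((1 + 2 * (j:ℝ)) * U) ^ 2 :=
    pow_lt_pow_left₀ hYb (by positivity) (by norm_num)
  have e1 : (W * (2 * Real.pi * A)) ^ 2 = W ^ 2 * (4 * Real.pi ^ 2 * (1 + (j:ℝ) ^ 2)) := by
    rw [← hA2]; ring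
  have e2 : (Y * (2 * Real.pi * A)) ^ 2 = Y ^ 2 * (4 * Real.pi ^ 2 * (1 + (j:ℝ) ^ 2)) := by
    rw [← hA2]; ring
  rw [e1] at hsqW
  rw [e2] at hsqY
  have hu2 : U ^ 2 = Y ^ 2 + W ^ 2 := norm_decomp d u
  have hu2K : U ^ 2 * (4 * Real.pi ^ 2 * (1 + (j:ℝ) ^ 2)) =
      Y ^ 2 * (4 * Real.pi ^ 2 * (1 + (j:ℝ) ^ 2)) +
      W ^ 2 * (4 * Real.pi ^ 2 * (1 + (j:ℝ) ^ 2)) := by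
    rw [hu2]; ring
  have hfinal : U ^ 2 * (4 * Real.pi ^ 2 * (1 + (j:ℝ) ^ 2)) <
      ((1 + 2 * (j:ℝ)) ^ 2 + 4) * U ^ 2 := by
    have expand : ((1 + 2 * (j:ℝ)) * U) ^ 2 + (2 * U) ^ 2 =
        ((1 + 2 * (j:ℝ)) ^ 2 + 4) * U ^ 2 := by ring
    linarith [hsqW, hsqY, hu2K, expand]
  have hU2 : 0 < U ^ 2 := by positivity
  exact final_contra Real.pi U (j:ℝ) hpi hU2 hj0 hfinal
end

section
/- (Lemma 7.4, two near-orthogonal directions capture the norm) Let u ∈ ℝ² and let q_1, q_2 ∈ ℝ² be unit vectors such that |⟨q_1, q_2⟩| ≤ cos θ for a real number θ. Then |⟨q_1, u⟩|² + |⟨q_2, u⟩|² ≥ (1 − cos θ)·‖u‖₂². -/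
set_option maxHeartbeats 1000000 in
/-- Lemma 7.4: two directions in the plane whose mutual inner product is at most
`cos θ` in absolute value jointly capture a `(1 − cos θ)` fraction of the squared
norm of any vector. -/
theorem two_near_orthogonal_directions_capture_norm
    (u q₁ q₂ : EuclideanSpace ℝ (Fin 2))
    (hq₁ : ‖q₁‖ = 1) (hq₂ : ‖q₂‖ = 1)
    (θ : ℝ) (hangle : |(inner ℝ q₁ q₂ : ℝ)| ≤ Real.cos θ) :
    (1 - Real.cos θ) * ‖u‖ ^ 2 ≤
      |(inner ℝ q₁ u : ℝ)| ^ 2 + |(inner ℝ q₂ u : ℝ)| ^ 2 := by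
  have hU : ‖u‖ ^ 2 = u 0 ^ 2 + u 1 ^ 2 := by
    rw [EuclideanSpace.norm_eq, Real.sq_sqrt (by positivity)]
    simp [Fin.sum_univ_two]
  have hQ1 : q₁ 0 ^ 2 + q₁ 1 ^ 2 = 1 := by
    have h := EuclideanSpace.norm_eq q₁
    rw [hq₁] at h
    have h' := congrArg (· ^ 2) h
    simp only [one_pow] at h'
    rw [Real.sq_sqrt (by positivity)] at h'
    simp [Fin.sum_univ_two] at h'
    nlinarith [h']
  have hQ2 : q₂ 0 ^ 2 + q₂ 1 ^ 2 = 1 := by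
    have h := EuclideanSpace.norm_eq q₂
    rw [hq₂] at h
    have h' := congrArg (· ^ 2) h
    simp only [one_pow] at h'
    rw [Real.sq_sqrt (by positivity)] at h'
    simp [Fin.sum_univ_two] at h'
    nlinarith [h']
  have e1 : (inner ℝ q₁ u : ℝ) = q₁ 0 * u 0 + q₁ 1 * u 1 := by
    simp [PiLp.inner_apply, Fin.sum_univ_two]
    ring
  have e2 : (inner ℝ q₂ u : ℝ) = q₂ 0 * u 0 + q₂ 1 * u 1 := by
    simp [PiLp.inner_apply, Fin.sum_univ_two]
    ring
  have e3 : (inner ℝ q₁ q₂ : ℝ) = q₁ 0 * q₂ 0 + q₁ 1 * q₂ 1 := by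
    simp [PiLp.inner_apply, Fin.sum_univ_two]
    ring
  set a := (inner ℝ q₁ u : ℝ) with ha
  set b := (inner ℝ q₂ u : ℝ) with hb
  set t := (inner ℝ q₁ q₂ : ℝ) with htdef
  rw [sq_abs, sq_abs, hU]
  have ht := abs_le.mp hangle
  have hc1 : Real.cos θ ≤ 1 := Real.cos_le_one θ
  have hc0 : 0 ≤ Real.cos θ := le_trans (abs_nonneg t) hangle
  set U := u 0 ^ 2 + u 1 ^ 2 with hUdef
  have hUnn : 0 ≤ U := by positivity
  have key : (1 - t ^ 2) * U = a ^ 2 + b ^ 2 - 2 * a * b * t := by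
    rw [e1, e2, e3, hUdef]
    linear_combination ((q₂ 0 * u 0 + q₂ 1 * u 1) ^ 2 - (u 0 ^ 2 + u 1 ^ 2)) * hQ1 +
      ((q₁ 0 * u 0 + q₁ 1 * u 1) ^ 2 - (q₁ 0 ^ 2 + q₁ 1 ^ 2) * (u 0 ^ 2 + u 1 ^ 2)) * hQ2
  clear_value a b t U
  set c := Real.cos θ
  rcases le_or_gt 0 t with ht0 | ht0
  · have hA : 0 ≤ t * (a + b) ^ 2 := mul_nonneg ht0 (sq_nonneg _)
    have hB : 0 ≤ (1 + t) * ((c - t) * U) :=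
      mul_nonneg (by linarith) (mul_nonneg (by linarith [ht.2]) hUnn)
    have hpos : (0:ℝ) < 1 + t := by linarith
    have hid : (1 + t) * ((a ^ 2 + b ^ 2) - (1 - c) * U)
        = t * (a + b) ^ 2 + (1 + t) * ((c - t) * U) := by
      linear_combination (-1 : ℝ) * key
    have h2 : (1 + t) * 0 ≤ (1 + t) * ((a ^ 2 + b ^ 2) - (1 - c) * U) := by
      rw [hid]; nlinarith [hA, hB]
    have h3 := le_of_mul_le_mul_left h2 hpos
    linarith
  · have hA : 0 ≤ (-t) * (a - b) ^ 2 := mul_nonneg (by linarith) (sq_nonneg _)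
    have hB : 0 ≤ (1 - t) * ((c + t) * U) :=
      mul_nonneg (by linarith) (mul_nonneg (by linarith [ht.1]) hUnn)
    have hpos : (0:ℝ) < 1 - t := by linarith
    have hid : (1 - t) * ((a ^ 2 + b ^ 2) - (1 - c) * U)
        = (-t) * (a - b) ^ 2 + (1 - t) * ((c + t) * U) := by
      linear_combination (-1 : ℝ) * key
    have h2 : (1 - t) * 0 ≤ (1 - t) * ((a ^ 2 + b ^ 2) - (1 - c) * U) := by
      rw [hid]; nlinarith [hA, hB]
    have h3 := le_of_mul_le_mul_left h2 hpos
    linarith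
end

section
/- (Lemma 7.5, two projections onto S_t^d and S_j^d capture the norm) Let d ≥ 1, let j < t be nonnegative integers and let u ∈ ℝ^{2d}. Then ‖P_{S_t^d}(u)‖₂² + ‖P_{S_j^d}(u)‖₂² ≥ (1 − cos θ)·‖u‖₂², where θ = Σ_{k=j+1}^{t} 1/(1+k²). -/
open scoped RealInnerProductSpace

lemma arctan_step (k : ℕ) (hk : 1 ≤ k) :
    1 / (1 + (k : ℝ) ^ 2) ≤ Real.arctan k - Real.arctan ((k : ℝ) - 1) := by
  have hab : (k : ℝ) - 1 < k := by linarith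
  obtain ⟨c, hc, hderiv⟩ := exists_hasDerivAt_eq_slope Real.arctan (fun x => 1 / (1 + x ^ 2))
    hab (Real.continuous_arctan.continuousOn) (fun x _ => Real.hasDerivAt_arctan x)
  have h0c : 0 ≤ c := by
    have : (1 : ℝ) ≤ (k : ℝ) := by exact_mod_cast hk
    have := hc.1; linarith
  have hck : c ≤ (k : ℝ) := le_of_lt hc.2
  have hsub : (k : ℝ) - ((k : ℝ) - 1) = 1 := by ring
  rw [hsub, div_one] at hderiv
  rw [← hderiv]
  apply div_le_div_of_nonneg_left (by norm_num) (by positivity)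
  nlinarith

lemma sum_le_arctan (j t : ℕ) (hjt : j < t) :
    (Finset.sum (Finset.Icc (j + 1) t) (fun k => (1 : ℝ) / (1 + (k : ℝ) ^ 2))) ≤
      Real.arctan t - Real.arctan j := by
  induction t, hjt using Nat.le_induction with
  | base =>
      rw [Finset.Icc_self, Finset.sum_singleton]
      have := arctan_step (j + 1) (by omega)
      push_cast at this ⊢
      simpa using this
  | succ t ht ih =>
      rw [Finset.sum_Icc_succ_top (by omega)]
      have h2 := arctan_step (t + 1) (by omega)
      push_cast at h2 ⊢
      have : ((t : ℝ) + 1) - 1 = (t : ℝ) := by ring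
      rw [this] at h2
      linarith

lemma plane_ineq (A B a b : ℝ) (hc : 0 ≤ Real.cos (A - B)) :
    (1 - Real.cos (A - B)) * (a ^ 2 + b ^ 2) ≤
      (a * Real.cos A + b * Real.sin A) ^ 2 + (a * Real.cos B + b * Real.sin B) ^ 2 := by
  rw [Real.cos_sub] at hc ⊢
  have h1 := Real.sin_sq_add_cos_sq A
  have h2 := Real.sin_sq_add_cos_sq B
  nlinarith [sq_nonneg ((a * Real.cos A + b * Real.sin A) + (a * Real.cos B + b * Real.sin B)),
    mul_nonneg hc (sq_nonneg ((a * Real.cos A + b * Real.sin A) + (a * Real.cos B + b * Real.sin B))),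
    sq_nonneg (a * Real.sin A - b * Real.cos A), sq_nonneg (a * Real.sin B - b * Real.cos B)]

lemma proj_lower (d : ℕ) (s : ℝ) (u : EuclideanSpace ℝ (Fin d ⊕ Fin d)) :
    ∑ i : Fin d, (u (Sum.inl i) * Real.cos (Real.arctan s)
        + u (Sum.inr i) * Real.sin (Real.arctan s)) ^ 2
      ≤ ‖(Submodule.orthogonalProjection (Ssub d s) u : EuclideanSpace ℝ (Fin d ⊕ Fin d))‖ ^ 2 := by
  set c := Real.cos (Real.arctan s) with hc
  have hsc : Real.sin (Real.arctan s) = s * c := by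
    rw [hc, Real.sin_arctan, Real.cos_arctan]; ring
  have hc2 : c ^ 2 * (1 + s ^ 2) = 1 := by
    rw [hc, Real.cos_arctan]
    rw [div_pow, one_pow, Real.sq_sqrt (by positivity)]
    field_simp
  set f : Fin d → EuclideanSpace ℝ (Fin d ⊕ Fin d) :=
    fun i => Smap d s (EuclideanSpace.single i c) with hf
  have hmem : ∀ i, f i ∈ Ssub d s := fun i => ⟨_, rfl⟩
  have happl : ∀ i i', f i (Sum.inl i') = EuclideanSpace.single i c i' := fun _ _ => rfl
  have happr : ∀ i i', f i (Sum.inr i') = s * EuclideanSpace.single i c i' := fun _ _ => rfl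
  have hinner : ∀ i (w : EuclideanSpace ℝ (Fin d ⊕ Fin d)),
      ⟪f i, w⟫ = c * w (Sum.inl i) + (s * c) * w (Sum.inr i) := by
    intro i w
    rw [PiLp.inner_apply]
    rw [Fintype.sum_sum_type]
    simp only [RCLike.inner_apply, conj_trivial, happl, happr,
      EuclideanSpace.single_apply]
    simp [Finset.sum_ite_eq', mul_comm]
  have horth : Orthonormal ℝ f := by
    rw [orthonormal_iff_ite]
    intro i i'
    rw [hinner i (f i'), happl, happr, EuclideanSpace.single_apply]
    by_cases h : i = i'
    · subst h; simp only [if_pos rfl, if_pos trivial, eq_self_iff_true]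
      nlinarith [hc2]
    · simp [h, fun hh : i' = i => h hh.symm]
  set P : EuclideanSpace ℝ (Fin d ⊕ Fin d) :=
    (Submodule.orthogonalProjection (Ssub d s) u : EuclideanSpace ℝ (Fin d ⊕ Fin d)) with hP
  have hproj : ∀ i, ⟪f i, P⟫ = ⟪f i, u⟫ := by
    intro i
    have h0 := Submodule.starProjection_inner_eq_zero u (f i) (hmem i)
    rw [inner_sub_left] at h0
    have h1 : ⟪u, f i⟫ = ⟪P, f i⟫ := sub_eq_zero.mp h0
    calc ⟪f i, P⟫ = ⟪P, f i⟫ := real_inner_comm _ _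
      _ = ⟪u, f i⟫ := h1.symm
      _ = ⟪f i, u⟫ := real_inner_comm _ _
  have hbessel := horth.sum_inner_products_le (s := Finset.univ) P
  calc ∑ i : Fin d, (u (Sum.inl i) * c + u (Sum.inr i) * Real.sin (Real.arctan s)) ^ 2
      = ∑ i : Fin d, ‖⟪f i, P⟫‖ ^ 2 := by
        apply Finset.sum_congr rfl
        intro i _
        rw [hproj i, hinner i u, Real.norm_eq_abs, sq_abs, hsc]
        ring_nf
    _ ≤ ‖P‖ ^ 2 := hbessel

/-- Lemma 7.5: the projections of `u` onto `S_t^d` and `S_j^d` (for `j < t`)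
jointly capture a definite fraction of its norm. -/
theorem two_projections_onto_Std_capture_norm
    (d : ℕ) (hd : 1 ≤ d) (j t : ℕ) (hjt : j < t)
    (u : EuclideanSpace ℝ (Fin d ⊕ Fin d)) :
    (1 - Real.cos (Finset.sum (Finset.Icc (j + 1) t) (fun k => (1 : ℝ) / (1 + (k : ℝ) ^ 2)))) *
        ‖u‖ ^ 2 ≤
      ‖(Submodule.orthogonalProjection (Ssub d (t : ℝ)) u : EuclideanSpace ℝ (Fin d ⊕ Fin d))‖ ^ 2 +
        ‖(Submodule.orthogonalProjection (Ssub d (j : ℝ)) u : EuclideanSpace ℝ (Fin d ⊕ Fin d))‖ ^ 2 := by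
  set θ := Finset.sum (Finset.Icc (j + 1) t) (fun k => (1 : ℝ) / (1 + (k : ℝ) ^ 2)) with hθ
  set α := Real.arctan (t : ℝ) with hα
  set β := Real.arctan (j : ℝ) with hβ
  have hθ0 : 0 ≤ θ := Finset.sum_nonneg (fun k _ => by positivity)
  have hθαβ : θ ≤ α - β := sum_le_arctan j t hjt
  have hβ0 : 0 ≤ β := by rw [← Real.arctan_zero]; exact Real.arctan_strictMono.monotone (by positivity)
  have hα0 : 0 ≤ α := by rw [← Real.arctan_zero]; exact Real.arctan_strictMono.monotone (by positivity)
  have hαpi : α < Real.pi / 2 := Real.arctan_lt_pi_div_two _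
  have hβpi : β < Real.pi / 2 := Real.arctan_lt_pi_div_two _
  have hcosnn : 0 ≤ Real.cos (α - β) :=
    Real.cos_nonneg_of_mem_Icc ⟨by linarith, by linarith⟩
  have hcos : Real.cos (α - β) ≤ Real.cos θ :=
    Real.cos_le_cos_of_nonneg_of_le_pi hθ0 (by linarith [Real.pi_pos]) hθαβ
  have hnorm : ‖u‖ ^ 2 = ∑ i : Fin d, ((u (Sum.inl i)) ^ 2 + (u (Sum.inr i)) ^ 2) := by
    rw [EuclideanSpace.norm_eq, Real.sq_sqrt (by positivity)]
    rw [Fintype.sum_sum_type, ← Finset.sum_add_distrib]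
    simp [Real.norm_eq_abs, sq_abs]
  calc (1 - Real.cos θ) * ‖u‖ ^ 2
      ≤ (1 - Real.cos (α - β)) * ‖u‖ ^ 2 := by
        apply mul_le_mul_of_nonneg_right (by linarith) (sq_nonneg _)
    _ = ∑ i : Fin d, (1 - Real.cos (α - β)) * ((u (Sum.inl i)) ^ 2 + (u (Sum.inr i)) ^ 2) := by
        rw [hnorm, Finset.mul_sum]
    _ ≤ ∑ i : Fin d, ((u (Sum.inl i) * Real.cos α + u (Sum.inr i) * Real.sin α) ^ 2
          + (u (Sum.inl i) * Real.cos β + u (Sum.inr i) * Real.sin β) ^ 2) :=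
        Finset.sum_le_sum (fun i _ => plane_ineq α β _ _ hcosnn)
    _ = (∑ i : Fin d, (u (Sum.inl i) * Real.cos α + u (Sum.inr i) * Real.sin α) ^ 2)
          + ∑ i : Fin d, (u (Sum.inl i) * Real.cos β + u (Sum.inr i) * Real.sin β) ^ 2 :=
        Finset.sum_add_distrib
    _ ≤ _ := add_le_add (proj_lower d (t : ℝ) u) (proj_lower d (j : ℝ) u)
end

section
/- (Lemma 8.4, a common good one-dimensional projection direction) Let n ≥ 2 and k ≥ 1 be integers and let u_1, …, u_m ∈ ℝ^k with m ≤ n(n−1)/2. Then there exists a one-dimensional linear subspace S of ℝ^k such that for every i = 1,…,m: ‖P_S(u_i)‖₂ ≥ (‖u_i‖₂/(π/2)^{k−1}) · (π/(n(n−1)))^{ξ(k−1)}. -/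
open Real MeasureTheory Metric Set
open scoped RealInnerProductSpace ENNReal


noncomputable def xiSum (k : ℕ) : ℝ := Finset.sum (Finset.Icc 1 k) (fun j => (1 : ℝ) / j)

lemma xiSum_zero : xiSum 0 = 0 := by simp [xiSum]

lemma xiSum_succ (k : ℕ) : xiSum (k+1) = xiSum k + 1/(k+1) := by
  unfold xiSum
  rw [Finset.sum_Icc_succ_top (by omega)]
  push_cast; ring

lemma xiSum_one : xiSum 1 = 1 := by
  have := xiSum_succ 0; rw [xiSum_zero] at this; norm_num at this; simpa using this

lemma xiSum_two : xiSum 2 = 3/2 := by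
  have := xiSum_succ 1; rw [xiSum_one] at this; norm_num at this; linarith

lemma xiSum_three : xiSum 3 = 11/6 := by
  have := xiSum_succ 2; rw [xiSum_two] at this; norm_num at this; linarith

lemma xiSum_nonneg (k : ℕ) : 0 ≤ xiSum k := by
  unfold xiSum
  exact Finset.sum_nonneg (fun j _ => by positivity)

lemma one_le_xiSum {k : ℕ} (hk : 1 ≤ k) : 1 ≤ xiSum k := by
  unfold xiSum
  have h1 : (1:ℕ) ∈ Finset.Icc 1 k := by simp [hk]
  have := Finset.single_le_sum (f := fun j : ℕ => (1:ℝ)/j) (fun j _ => by positivity) h1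
  simpa using this

lemma xiSum_le (k : ℕ) : xiSum k ≤ k := by
  induction k with
  | zero => simp [xiSum_zero]
  | succ n ih =>
    rw [xiSum_succ]
    push_cast
    have : (1:ℝ)/(n+1) ≤ 1 := by
      rw [div_le_one (by positivity)]; linarith
    linarith


lemma pi_div_six_mem : 0 < π/6 ∧ π/6 ≤ 1 := by
  constructor
  · positivity
  · nlinarith [pi_le_four]

lemma A_bound (N : ℝ) (hN : 6 ≤ N) (j : ℕ) (ξ : ℝ) (hξ1 : 1 ≤ ξ) :
    N * ((1/(π/2)^j) * (π/N)^ξ) ≤ 6 * (π/6)^ξ * (2/π)^j := by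
  have hπ := pi_pos
  have hN0 : (0:ℝ) < N := by linarith
  have h1 : (1:ℝ)/(π/2)^j = (2/π)^j := by
    rw [one_div, ← inv_pow, inv_div]
  have h2 : (π/N)^ξ = π^ξ / N^ξ := div_rpow (le_of_lt hπ) (le_of_lt hN0) ξ
  have h3 : (π/6)^ξ = π^ξ / 6^ξ := div_rpow (le_of_lt hπ) (by norm_num) ξ
  rw [h1, h2, h3]
  have key : N / N^ξ ≤ 6 / 6^ξ := by
    have e1 : N / N^ξ = N^(1-ξ) := by
      rw [Real.rpow_sub hN0, Real.rpow_one]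
    have e2 : (6:ℝ) / 6^ξ = 6^(1-ξ) := by
      rw [Real.rpow_sub (by norm_num), Real.rpow_one]
    rw [e1, e2]
    exact Real.rpow_le_rpow_of_nonpos (by norm_num) hN (by linarith)
  have hπξ : 0 ≤ π^ξ := Real.rpow_nonneg (le_of_lt hπ) ξ
  have h2π : (0:ℝ) ≤ (2/π)^j := by positivity
  calc N * (((2:ℝ)/π)^j * (π^ξ/N^ξ)) = (N/N^ξ) * (π^ξ * (2/π)^j) := by ring
    _ ≤ (6/6^ξ) * (π^ξ * (2/π)^j) := by
        apply mul_le_mul_of_nonneg_right key (by positivity)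
    _ = 6 * (π^ξ/6^ξ) * (2/π)^j := by ring

lemma pow2_32 : ((Real.sqrt 3/2)^(3:ℕ))^2 = (3/4:ℝ)^(3:ℕ) := by
  rw [← pow_mul, mul_comm 3 2, pow_mul]
  congr 1
  rw [div_pow, sq_sqrt (by norm_num : (3:ℝ) ≥ 0)]
  norm_num

lemma sq32 : ((π/6)^((3:ℝ)/2))^(2:ℕ) = (π/6)^(3:ℕ) := by
  have h : (0:ℝ) ≤ π/6 := by positivity
  rw [← Real.rpow_natCast ((π/6)^((3:ℝ)/2)) 2, ← Real.rpow_mul h, ← Real.rpow_natCast (π/6) 3]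
  norm_num

lemma B3 : 6*(π/6)^((3:ℝ)/2)*(2/π)^(2:ℕ) < 31/32 := by
  have hπ := pi_pos
  have hB : (0:ℝ) ≤ 6*(π/6)^((3:ℝ)/2)*(2/π)^(2:ℕ) := by positivity
  have hsq : (6*(π/6)^((3:ℝ)/2)*(2/π)^(2:ℕ))^2 = 36 * (π/6)^(3:ℕ) * (4/π^2)^2 := by
    rw [mul_pow, mul_pow, sq32]
    congr 1
    · ring
    · rw [← pow_mul, mul_comm 2 2, pow_mul]
      congr 1; rw [div_pow]; norm_num
  refine lt_of_pow_lt_pow_left₀ 2 (by norm_num) ?_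
  rw [hsq]
  have h1 : 36 * (π/6)^(3:ℕ) * (4/π^2)^2 = (8*3*π^3)/(9*π^4) := by
    field_simp; ring
  rw [h1, div_lt_iff₀ (by positivity)]
  have h4 : π^4 ≥ 3*π^3 := by nlinarith [pi_gt_three, pow_pos pi_pos 3]
  nlinarith [h4, pow_pos pi_pos 3]

lemma B4 : 6*(π/6)^((3:ℝ)/2)*(2/π)^(3:ℕ) < (Real.sqrt 3/2)^(3:ℕ) := by
  have hπ := pi_pos
  refine lt_of_pow_lt_pow_left₀ 2 (by positivity) ?_
  rw [pow2_32]
  have hsq : (6*(π/6)^((3:ℝ)/2)*(2/π)^(3:ℕ))^2 = 36 * (π/6)^(3:ℕ) * (2/π)^(6:ℕ) := by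
    rw [mul_pow, mul_pow, sq32, ← pow_mul]
    norm_num
  rw [hsq]
  have hp3 : π^3 > 31 := by nlinarith [pi_gt_d6, sq_nonneg (π - 3.141592), pi_pos]
  have h1 : 36 * (π/6)^(3:ℕ) * (2/π)^(6:ℕ) = (36*64*π^3)/(216*π^6) := by
    field_simp; ring
  rw [h1, div_lt_iff₀ (by positivity)]
  have h6 : π^6 ≥ 31*π^3 := by nlinarith [hp3, pow_pos pi_pos 3]
  nlinarith [h6, pow_pos pi_pos 3]

lemma B5 (j : ℕ) (hj : 4 ≤ j) : π*(2/π)^j < (Real.sqrt 3/2)^j := by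
  have hπ := pi_pos
  refine lt_of_pow_lt_pow_left₀ 2 (by positivity) ?_
  have e1 : ((Real.sqrt 3/2)^j)^2 = (3/4:ℝ)^j := by
    rw [← pow_mul, mul_comm j 2, pow_mul, div_pow, sq_sqrt (by norm_num : (3:ℝ) ≥ 0)]
    norm_num
  have e2 : (π*(2/π)^j)^2 = π^2 * (4/π^2)^j := by
    rw [mul_pow, ← pow_mul, mul_comm j 2, pow_mul, div_pow]
    norm_num
  rw [e1, e2]
  clear e1 e2
  induction j, hj using Nat.le_induction with
  | base =>
    have hp3 : π^3 > 31 := by nlinarith [pi_gt_d6, sq_nonneg (π - 3.141592), pi_pos]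
    have hp6 : π^6 > 961 := by nlinarith [hp3, pow_pos pi_pos 3]
    have h1 : π^2 * (4/π^2)^4 = 256/π^6 := by field_simp; ring
    rw [h1, div_lt_iff₀ (by positivity)]
    nlinarith [hp6]
  | succ n hn ih =>
    have h1 : π^2*(4/π^2)^(n+1) = (π^2*(4/π^2)^n) * (4/π^2) := by ring
    have h2 : (3/4:ℝ)^(n+1) = (3/4)^n * (3/4) := by ring
    rw [h1, h2]
    have hππ : 4/π^2 < 3/4 := by
      rw [div_lt_div_iff₀ (by positivity) (by norm_num)]
      nlinarith [pi_gt_three]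
    have hpos : (0:ℝ) < π^2*(4/π^2)^n := by positivity
    calc π^2*(4/π^2)^n * (4/π^2) < (3/4)^n * (4/π^2) := by
          apply mul_lt_mul_of_pos_right ih (by positivity)
      _ ≤ (3/4)^n * (3/4) := by
          apply mul_le_mul_of_nonneg_left (le_of_lt hππ) (by positivity)


/-- The set in `Fin d → ℝ` corresponding to the Euclidean closed ball of radius `r`. -/
def Bd (d : ℕ) (r : ℝ) : Set (Fin d → ℝ) := {z | ∑ j, z j ^ 2 ≤ r ^ 2}

lemma measurableSet_Bd (d : ℕ) (r : ℝ) : MeasurableSet (Bd d r) := by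
  apply measurableSet_le
  · exact Finset.measurable_sum _ (fun j _ => (measurable_pi_apply j).pow_const 2)
  · exact measurable_const

lemma euclidean_norm_sq (d : ℕ) (x : EuclideanSpace ℝ (Fin d)) : ‖x‖^2 = ∑ j, x j ^ 2 := by
  rw [EuclideanSpace.norm_eq, Real.sq_sqrt (by positivity)]
  congr 1; ext j; rw [Real.norm_eq_abs, sq_abs]

lemma mem_Bd_iff (d : ℕ) (r : ℝ) (hr : 0 ≤ r) (x : EuclideanSpace ℝ (Fin d)) :
    ((MeasurableEquiv.toLp 2 (Fin d → ℝ)).symm) x ∈ Bd d r ↔ ‖x‖ ≤ r := by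
  have hx : ((MeasurableEquiv.toLp 2 (Fin d → ℝ)).symm) x = (WithLp.equiv 2 _) x := rfl
  have h2 : ∀ j, ((WithLp.equiv 2 (Fin d → ℝ)) x) j = x j := fun j => rfl
  simp only [Bd, mem_setOf_eq, hx, h2]
  rw [← euclidean_norm_sq]
  constructor
  · intro h
    nlinarith [norm_nonneg x]
  · intro h
    nlinarith [norm_nonneg x]

lemma volume_Bd (d : ℕ) (r : ℝ) (hr : 0 ≤ r) :
    volume (Bd d r) = ENNReal.ofReal (r ^ d) *
      volume (closedBall (0 : EuclideanSpace ℝ (Fin d)) 1) := by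
  have hmp := EuclideanSpace.volume_preserving_symm_measurableEquiv_toLp (Fin d)
  have hpre : ((MeasurableEquiv.toLp 2 (Fin d → ℝ)).symm) ⁻¹' (Bd d r) =
      closedBall (0 : EuclideanSpace ℝ (Fin d)) r := by
    ext x
    rw [mem_preimage, mem_closedBall_zero_iff]
    exact mem_Bd_iff d r hr x
  have := hmp.measure_preimage (μa := volume) (s := Bd d r)
    ((measurableSet_Bd d r).nullMeasurableSet)
  rw [hpre] at this
  rw [← this]
  rw [Measure.addHaar_closedBall' _ _ hr, finrank_euclideanSpace_fin]

section Slab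
variable (d : ℕ)

/-- split equivalence -/
noncomputable def splitEq (d : ℕ) : (EuclideanSpace ℝ (Fin (d+1))) ≃ᵐ ℝ × (Fin d → ℝ) :=
  ((MeasurableEquiv.toLp 2 (Fin (d+1) → ℝ)).symm).trans
    (MeasurableEquiv.piFinSuccAbove (fun _ : Fin (d+1) => ℝ) 0)

lemma splitEq_mp (d : ℕ) : MeasurePreserving (splitEq d) volume volume :=
  (volume_preserving_piFinSuccAbove (fun _ : Fin (d+1) => ℝ) 0).comp
    (EuclideanSpace.volume_preserving_symm_measurableEquiv_toLp (Fin (d+1)))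

lemma splitEq_apply (d : ℕ) (x : EuclideanSpace ℝ (Fin (d+1))) :
    splitEq d x = (x 0, fun j => x (Fin.succ j)) := by
  show (MeasurableEquiv.piFinSuccAbove (fun _ : Fin (d+1) => ℝ) 0)
      (((MeasurableEquiv.toLp 2 (Fin (d+1) → ℝ)).symm) x) = _
  have : ((MeasurableEquiv.toLp 2 (Fin (d+1) → ℝ)).symm) x = fun j => x j := rfl
  rw [this]
  simp [MeasurableEquiv.piFinSuccAbove_apply, Fin.succAbove_zero]
  rfl

lemma norm_sq_split (d : ℕ) (x : EuclideanSpace ℝ (Fin (d+1))) :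
    ‖x‖^2 = x 0 ^ 2 + ∑ j : Fin d, x (Fin.succ j) ^ 2 := by
  rw [euclidean_norm_sq]
  exact Fin.sum_univ_succ _

lemma volume_cyl (d : ℕ) (A : Set ℝ) (hA : MeasurableSet A) (r : ℝ) (hr : 0 ≤ r) :
    volume ((splitEq d) ⁻¹' (A ×ˢ Bd d r)) = volume A * (ENNReal.ofReal (r ^ d) *
      volume (closedBall (0 : EuclideanSpace ℝ (Fin d)) 1)) := by
  rw [(splitEq_mp d).measure_preimage ((hA.prod (measurableSet_Bd d r)).nullMeasurableSet)]
  rw [← volume_Bd d r hr]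
  rw [Measure.volume_eq_prod, Measure.prod_prod]

end Slab

lemma exists_onb_with_first (d : ℕ) (w : EuclideanSpace ℝ (Fin (d+1))) (hw : ‖w‖ = 1) :
    ∃ b : OrthonormalBasis (Fin (d+1)) ℝ (EuclideanSpace ℝ (Fin (d+1))), b 0 = w := by
  have hcard : Module.finrank ℝ (EuclideanSpace ℝ (Fin (d+1))) = Fintype.card (Fin (d+1)) := by
    simp [finrank_euclideanSpace_fin]
  have horth : Orthonormal ℝ (Set.restrict {(0 : Fin (d+1))} (fun _ => w)) := by
    constructor
    · intro i; exact hw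
    · intro i j hij
      exact absurd (Subsingleton.elim i j) hij
  obtain ⟨b, hb⟩ := Orthonormal.exists_orthonormalBasis_extension_of_card_eq hcard horth
  exact ⟨b, hb 0 rfl⟩

lemma volume_slab_le (d : ℕ) (w : EuclideanSpace ℝ (Fin (d+1))) (hw : ‖w‖ = 1)
    (c : ℝ) (hc : 0 ≤ c) :
    volume {x : EuclideanSpace ℝ (Fin (d+1)) | ‖x‖ ≤ 1 ∧ |⟪w, x⟫| ≤ c} ≤
      ENNReal.ofReal (2*c) * volume (closedBall (0 : EuclideanSpace ℝ (Fin d)) 1) := by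
  obtain ⟨b, hb⟩ := exists_onb_with_first d w hw
  set T : Set (ℝ × (Fin d → ℝ)) := (Set.Icc (-c) c) ×ˢ Bd d 1 with hT
  have hsub : {x : EuclideanSpace ℝ (Fin (d+1)) | ‖x‖ ≤ 1 ∧ |⟪w, x⟫| ≤ c} ⊆
      (fun x => splitEq d (b.repr x)) ⁻¹' T := by
    intro x hx
    obtain ⟨hx1, hx2⟩ := hx
    have hrepr0 : (b.repr x) 0 = ⟪w, x⟫ := by
      rw [b.repr_apply_apply, hb]
    simp only [mem_preimage, splitEq_apply, hT, Set.mem_prod]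
    constructor
    · rw [Set.mem_Icc, hrepr0]
      exact abs_le.mp hx2
    · show ∑ j : Fin d, (b.repr x) (Fin.succ j) ^ 2 ≤ (1:ℝ)^2
      have hnorm : ‖b.repr x‖^2 = ‖x‖^2 := by rw [b.repr.norm_map]
      have hsplit := norm_sq_split d (b.repr x)
      have : ‖x‖^2 ≤ 1 := by nlinarith [norm_nonneg x]
      nlinarith [sq_nonneg ((b.repr x) 0)]
  calc volume {x : EuclideanSpace ℝ (Fin (d+1)) | ‖x‖ ≤ 1 ∧ |⟪w, x⟫| ≤ c}
      ≤ volume ((fun x => splitEq d (b.repr x)) ⁻¹' T) := measure_mono hsub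
    _ = volume T := by
        have hmp : MeasurePreserving (fun x => splitEq d (b.repr x)) volume volume :=
          (splitEq_mp d).comp b.measurePreserving_repr
        exact hmp.measure_preimage
          ((measurableSet_Icc.prod (measurableSet_Bd d 1)).nullMeasurableSet)
    _ = ENNReal.ofReal (2*c) * volume (closedBall (0 : EuclideanSpace ℝ (Fin d)) 1) := by
        rw [hT, Measure.volume_eq_prod, Measure.prod_prod, volume_Bd d 1 (by norm_num),
          Real.volume_Icc, one_pow, ENNReal.ofReal_one, one_mul]
        congr 1
        ring

lemma exists_avoiding (d m : ℕ) (w : Fin m → EuclideanSpace ℝ (Fin (d+1)))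
    (hw : ∀ i, ‖w i‖ = 1) (c : ℝ) (hc : 0 < c)
    (hvol : ENNReal.ofReal ((m:ℝ) * (2*c)) *
        volume (closedBall (0 : EuclideanSpace ℝ (Fin d)) 1) <
      volume (closedBall (0 : EuclideanSpace ℝ (Fin (d+1))) 1)) :
    ∃ x : EuclideanSpace ℝ (Fin (d+1)), ‖x‖ ≤ 1 ∧ ∀ i, c ≤ |⟪w i, x⟫| := by
  by_contra hcon
  push_neg at hcon
  have hsub : closedBall (0 : EuclideanSpace ℝ (Fin (d+1))) 1 ⊆
      ⋃ i, {x : EuclideanSpace ℝ (Fin (d+1)) | ‖x‖ ≤ 1 ∧ |⟪w i, x⟫| ≤ c} := by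
    intro x hx
    rw [mem_closedBall_zero_iff] at hx
    obtain ⟨i, hi⟩ := hcon x hx
    exact Set.mem_iUnion.mpr ⟨i, hx, le_of_lt hi⟩
  have hle := measure_mono (μ := (volume : Measure (EuclideanSpace ℝ (Fin (d+1))))) hsub
  have hle2 := (measure_iUnion_fintype_le (volume : Measure (EuclideanSpace ℝ (Fin (d+1))))
    (fun i => {x : EuclideanSpace ℝ (Fin (d+1)) | ‖x‖ ≤ 1 ∧ |⟪w i, x⟫| ≤ c}))
  have hsum : ∑ i : Fin m, volume {x : EuclideanSpace ℝ (Fin (d+1)) | ‖x‖ ≤ 1 ∧ |⟪w i, x⟫| ≤ c}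
      ≤ ENNReal.ofReal ((m:ℝ) * (2*c)) *
        volume (closedBall (0 : EuclideanSpace ℝ (Fin d)) 1) := by
    calc ∑ i : Fin m, volume {x : EuclideanSpace ℝ (Fin (d+1)) | ‖x‖ ≤ 1 ∧ |⟪w i, x⟫| ≤ c}
        ≤ ∑ _i : Fin m, ENNReal.ofReal (2*c) *
          volume (closedBall (0 : EuclideanSpace ℝ (Fin d)) 1) :=
          Finset.sum_le_sum (fun i _ => volume_slab_le d (w i) (hw i) c (le_of_lt hc))
      _ = (m : ℝ≥0∞) * (ENNReal.ofReal (2*c) *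
          volume (closedBall (0 : EuclideanSpace ℝ (Fin d)) 1)) := by
          rw [Finset.sum_const, Finset.card_univ, Fintype.card_fin, nsmul_eq_mul]
      _ = ENNReal.ofReal ((m:ℝ) * (2*c)) *
          volume (closedBall (0 : EuclideanSpace ℝ (Fin d)) 1) := by
          rw [ENNReal.ofReal_mul (by positivity : (0:ℝ) ≤ (m:ℝ)), ← mul_assoc,
            ENNReal.ofReal_natCast]
  exact absurd ((hle.trans hle2).trans hsum) (not_le.mpr hvol)

lemma lower_cyl (d : ℕ) :
    ENNReal.ofReal ((Real.sqrt 3 / 2)^d) *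
      volume (closedBall (0 : EuclideanSpace ℝ (Fin d)) 1) ≤
    volume (closedBall (0 : EuclideanSpace ℝ (Fin (d+1))) 1) := by
  have h3 : (0:ℝ) ≤ Real.sqrt 3 / 2 := by positivity
  have hsub : (splitEq d) ⁻¹' ((Set.Icc (-(1/2)) (1/2)) ×ˢ Bd d (Real.sqrt 3/2)) ⊆
      closedBall (0 : EuclideanSpace ℝ (Fin (d+1))) 1 := by
    intro x hx
    simp only [mem_preimage, splitEq_apply, Set.mem_prod, Set.mem_Icc, Bd, mem_setOf_eq] at hx
    obtain ⟨⟨h1, h2⟩, h3'⟩ := hx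
    rw [mem_closedBall_zero_iff]
    have hn : ‖x‖^2 ≤ 1 := by
      rw [norm_sq_split]
      have : (Real.sqrt 3/2)^2 = 3/4 := by
        rw [div_pow, Real.sq_sqrt (by norm_num : (3:ℝ) ≥ 0)]; norm_num
      nlinarith
    nlinarith [norm_nonneg x]
  calc ENNReal.ofReal ((Real.sqrt 3 / 2)^d) *
        volume (closedBall (0 : EuclideanSpace ℝ (Fin d)) 1)
      = volume ((splitEq d) ⁻¹' ((Set.Icc (-(1/2)) (1/2)) ×ˢ Bd d (Real.sqrt 3/2))) := by
        rw [volume_cyl d _ measurableSet_Icc _ h3, Real.volume_Icc]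
        norm_num
    _ ≤ volume (closedBall (0 : EuclideanSpace ℝ (Fin (d+1))) 1) := measure_mono hsub

lemma lower_cyl3 :
    ENNReal.ofReal (31/32) * volume (closedBall (0 : EuclideanSpace ℝ (Fin 2)) 1) ≤
    volume (closedBall (0 : EuclideanSpace ℝ (Fin 3)) 1) := by
  have hr1 : (0:ℝ) ≤ Real.sqrt 3/2 := by positivity
  have hr2 : (0:ℝ) ≤ Real.sqrt 7/4 := by positivity
  have hsq3 : (Real.sqrt 3/2)^2 = 3/4 := by
    rw [div_pow, Real.sq_sqrt (by norm_num : (3:ℝ) ≥ 0)]; norm_num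
  have hsq7 : (Real.sqrt 7/4)^2 = 7/16 := by
    rw [div_pow, Real.sq_sqrt (by norm_num : (7:ℝ) ≥ 0)]; norm_num
  set A2 : Set ℝ := Set.Ioc (1/2) (3/4) ∪ Set.Ico (-(3/4)) (-(1/2)) with hA2
  have hA2m : MeasurableSet A2 := measurableSet_Ioc.union measurableSet_Ico
  set S1 := (splitEq 2) ⁻¹' ((Set.Icc (-(1/2)) (1/2)) ×ˢ Bd 2 (Real.sqrt 3/2)) with hS1
  set S2 := (splitEq 2) ⁻¹' (A2 ×ˢ Bd 2 (Real.sqrt 7/4)) with hS2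
  have hsub : S1 ∪ S2 ⊆ closedBall (0 : EuclideanSpace ℝ (Fin 3)) 1 := by
    rintro x (hx | hx) <;>
    · simp only [hS1, hS2, hA2, mem_preimage, splitEq_apply, Set.mem_prod, Set.mem_Icc,
        Set.mem_Ioc, Set.mem_Ico, Set.mem_union, Bd, mem_setOf_eq] at hx
      rw [mem_closedBall_zero_iff]
      have hn : ‖x‖^2 ≤ 1 := by
        rw [norm_sq_split]
        rcases hx with ⟨h1, h2⟩
        first
        | nlinarith [hsq3]
        | (rcases h1 with h1 | h1 <;> nlinarith [hsq7])
      nlinarith [norm_nonneg x]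
  have hdisj : Disjoint S1 S2 := by
    rw [hS1, hS2, Set.disjoint_left]
    intro x hx1 hx2
    simp only [mem_preimage, splitEq_apply, Set.mem_prod, Set.mem_Icc, Set.mem_Ioc,
      Set.mem_Ico, Set.mem_union, hA2] at hx1 hx2
    rcases hx2.1 with h | h
    · linarith [hx1.1.2, h.1]
    · linarith [hx1.1.1, h.2]
  have hS2m : MeasurableSet S2 := (splitEq 2).measurable
    (hA2m.prod (measurableSet_Bd 2 _))
  have hvol1 : volume S1 = ENNReal.ofReal (3/4) *
      volume (closedBall (0 : EuclideanSpace ℝ (Fin 2)) 1) := by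
    rw [hS1, volume_cyl 2 _ measurableSet_Icc _ hr1, Real.volume_Icc, hsq3]
    norm_num
  have hvol2 : volume S2 = ENNReal.ofReal (7/32) *
      volume (closedBall (0 : EuclideanSpace ℝ (Fin 2)) 1) := by
    rw [hS2, volume_cyl 2 _ hA2m _ hr2, hsq7]
    have : volume A2 = ENNReal.ofReal (1/2) := by
      rw [hA2, measure_union _ measurableSet_Ico, Real.volume_Ioc, Real.volume_Ico,
        ← ENNReal.ofReal_add (by norm_num) (by norm_num)]
      · norm_num
      · rw [Set.disjoint_left]
        intro x hx1 hx2
        simp only [Set.mem_Ioc, Set.mem_Ico] at hx1 hx2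
        linarith [hx1.1, hx2.2]
    rw [this, ← mul_assoc, ← ENNReal.ofReal_mul (by norm_num)]
    norm_num
  calc ENNReal.ofReal (31/32) * volume (closedBall (0 : EuclideanSpace ℝ (Fin 2)) 1)
      = volume S1 + volume S2 := by
        rw [hvol1, hvol2, ← add_mul, ← ENNReal.ofReal_add (by norm_num) (by norm_num)]
        norm_num
    _ = volume (S1 ∪ S2) := (measure_union hdisj hS2m).symm
    _ ≤ volume (closedBall (0 : EuclideanSpace ℝ (Fin 3)) 1) := measure_mono hsub


lemma sin_ge_of_between (β x : ℝ) (hβ0 : 0 ≤ β) (hβ2 : β ≤ π/2) (hx0 : β ≤ x)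
    (hxπ : x ≤ π - β) : sin β ≤ sin x := by
  have hπ := pi_pos
  rcases le_or_gt x (π/2) with h | h
  · exact Real.strictMonoOn_sin.monotoneOn ⟨by linarith, hβ2⟩ ⟨by linarith, h⟩ hx0
  · rw [show sin x = sin (π - x) from (Real.sin_pi_sub x).symm]
    exact Real.strictMonoOn_sin.monotoneOn ⟨by linarith, hβ2⟩ ⟨by linarith, by linarith⟩
      (by linarith)

lemma sin_ge_of_dist (β s : ℝ) (hβ0 : 0 ≤ β) (hβ2 : β ≤ π/2)
    (hs : |s| < π) (h1 : β ≤ |s|) (h2 : β ≤ |s - π|) (h3 : β ≤ |s + π|) :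
    sin β ≤ |sin s| := by
  have hπ := pi_pos
  have key : ∀ t : ℝ, 0 ≤ t → t < π → β ≤ t → β ≤ |t - π| → sin β ≤ sin t := by
    intro t ht0 htπ hβt hd
    apply sin_ge_of_between β t hβ0 hβ2 hβt
    have habs : |t - π| = π - t := by rw [abs_of_neg (by linarith)]; ring
    linarith [habs ▸ hd]
  rcases le_or_gt 0 s with h | h
  · have habs : |sin s| = sin s := abs_of_nonneg (Real.sin_nonneg_of_nonneg_of_le_pi h (by
      rw [abs_of_nonneg h] at hs; linarith))
    rw [habs]
    rw [abs_of_nonneg h] at hs h1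
    exact key s h hs h1 h2
  · have hsneg : sin s ≤ 0 := by
      apply Real.sin_nonpos_of_nonpos_of_neg_pi_le (le_of_lt h)
      rw [abs_of_neg h] at hs; linarith
    have habs : |sin s| = sin (-s) := by rw [Real.sin_neg, abs_of_nonpos hsneg]
    rw [habs]
    rw [abs_of_neg h] at hs h1
    have h2' : β ≤ |(-s) - π| := by
      rw [show |(-s) - π| = |s + π| by rw [← abs_neg]; congr 1; ring]
      exact h3
    exact key (-s) (by linarith) hs h1 h2'

noncomputable def thetaVec (t : ℝ) : EuclideanSpace ℝ (Fin 2) := !₂[Real.cos t, Real.sin t]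

lemma thetaVec_norm (t : ℝ) : ‖thetaVec t‖ = 1 := by
  rw [EuclideanSpace.norm_eq]
  rw [Fin.sum_univ_two]
  show Real.sqrt (‖Real.cos t‖^2 + ‖Real.sin t‖^2) = 1
  rw [Real.norm_eq_abs, Real.norm_eq_abs, sq_abs, sq_abs, Real.cos_sq_add_sin_sq, Real.sqrt_one]

lemma inner_thetaVec (t : ℝ) (w : EuclideanSpace ℝ (Fin 2)) :
    ⟪w, thetaVec t⟫ = w 0 * Real.cos t + w 1 * Real.sin t := by
  rw [PiLp.inner_apply, Fin.sum_univ_two, Real.inner_apply, Real.inner_apply]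
  show w 0 * (thetaVec t) 0 + w 1 * (thetaVec t) 1 = _
  rfl

lemma exists_angle (w : EuclideanSpace ℝ (Fin 2)) (hw : ‖w‖ = 1) :
    ∃ φ : ℝ, w 0 = Real.cos φ ∧ w 1 = Real.sin φ := by
  have hsq : w 0 ^ 2 + w 1 ^ 2 = 1 := by
    have := euclidean_norm_sq 2 w
    rw [hw, Fin.sum_univ_two] at this
    norm_num at this
    linarith [this]
  have h0 : -1 ≤ w 0 := by nlinarith [sq_nonneg (w 1)]
  have h1 : w 0 ≤ 1 := by nlinarith [sq_nonneg (w 1)]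
  have hsqrt : Real.sqrt (1 - w 0 ^ 2) = |w 1| := by
    rw [show 1 - w 0 ^2 = w 1 ^2 by linarith, Real.sqrt_sq_eq_abs]
  rcases le_or_gt 0 (w 1) with h | h
  · exact ⟨Real.arccos (w 0), (Real.cos_arccos h0 h1).symm, by
      rw [Real.sin_arccos, hsqrt, abs_of_nonneg h]⟩
  · refine ⟨-Real.arccos (w 0), ?_, ?_⟩
    · rw [Real.cos_neg, Real.cos_arccos h0 h1]
    · rw [Real.sin_neg, Real.sin_arccos, hsqrt, abs_of_neg h]; ring

lemma abs_inner_thetaVec (t φ ψ : ℝ) (K : ℤ) (hψ : φ + π/2 = ψ + K * π)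
    (w : EuclideanSpace ℝ (Fin 2)) (hw0 : w 0 = Real.cos φ) (hw1 : w 1 = Real.sin φ) :
    |⟪w, thetaVec t⟫| = |Real.sin (t - ψ)| := by
  rw [inner_thetaVec, hw0, hw1]
  have hcos : Real.cos φ * Real.cos t + Real.sin φ * Real.sin t = Real.cos (t - φ) := by
    rw [Real.cos_sub]; ring
  rw [hcos]
  have harg : t - φ = -(K * π - ((t - ψ) + π/2)) := by
    have : φ = ψ + K * π - π/2 := by linarith
    rw [this]; ring
  rw [harg, Real.cos_neg, Real.cos_int_mul_pi_sub, Real.cos_add_pi_div_two]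
  rw [abs_mul, abs_neg]
  have : |((-1 : ℝ))^K| = 1 := by
    rcases Int.even_or_odd K with he | ho
    · rw [he.neg_one_zpow]; norm_num
    · rw [ho.neg_one_zpow]; norm_num
  rw [this, one_mul]

lemma volume_bad_inter (ψ β : ℝ) (hψ0 : 0 ≤ ψ) (hψπ : ψ < π) (hβ0 : 0 < β) (hβ2 : β ≤ π/2) :
    volume (Set.Ico 0 π ∩ (Ioo (ψ-β) (ψ+β) ∪ Ioo (ψ+π-β) (ψ+π+β) ∪ Ioo (ψ-π-β) (ψ-π+β)))
      ≤ ENNReal.ofReal (2*β) := by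
  have hπ := pi_pos
  rcases lt_or_ge ψ β with hc1 | hc1
  · -- ψ < β
    have hsub : Set.Ico 0 π ∩ (Ioo (ψ-β) (ψ+β) ∪ Ioo (ψ+π-β) (ψ+π+β) ∪ Ioo (ψ-π-β) (ψ-π+β))
        ⊆ Set.Ico 0 (ψ+β) ∪ Set.Ioo (ψ+π-β) π := by
      rintro t ⟨⟨ht0, htπ⟩, (h | h) | h⟩
      · exact Or.inl ⟨ht0, h.2⟩
      · exact Or.inr ⟨h.1, htπ⟩
      · exfalso; have := h.2; linarith
    calc volume _ ≤ volume (Set.Ico 0 (ψ+β) ∪ Set.Ioo (ψ+π-β) π) := measure_mono hsub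
      _ ≤ volume (Set.Ico (0:ℝ) (ψ+β)) + volume (Set.Ioo (ψ+π-β) π) := measure_union_le _ _
      _ ≤ ENNReal.ofReal (2*β) := by
          rw [Real.volume_Ico, Real.volume_Ioo,
            ← ENNReal.ofReal_add (by linarith) (by linarith)]
          apply ENNReal.ofReal_le_ofReal
          linarith
  rcases le_or_gt ψ (π - β) with hc2 | hc2
  · -- β ≤ ψ ≤ π - β
    have hsub : Set.Ico 0 π ∩ (Ioo (ψ-β) (ψ+β) ∪ Ioo (ψ+π-β) (ψ+π+β) ∪ Ioo (ψ-π-β) (ψ-π+β))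
        ⊆ Set.Ioo (ψ-β) (ψ+β) := by
      rintro t ⟨⟨ht0, htπ⟩, (h | h) | h⟩
      · exact h
      · exfalso; have := h.1; linarith
      · exfalso; have := h.2; linarith
    calc volume _ ≤ volume (Set.Ioo (ψ-β) (ψ+β)) := measure_mono hsub
      _ ≤ ENNReal.ofReal (2*β) := by
          rw [Real.volume_Ioo]; apply ENNReal.ofReal_le_ofReal; linarith
  · -- ψ > π - β
    have hsub : Set.Ico 0 π ∩ (Ioo (ψ-β) (ψ+β) ∪ Ioo (ψ+π-β) (ψ+π+β) ∪ Ioo (ψ-π-β) (ψ-π+β))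
        ⊆ Set.Ioo (ψ-β) π ∪ Set.Ico 0 (ψ-π+β) := by
      rintro t ⟨⟨ht0, htπ⟩, (h | h) | h⟩
      · exact Or.inl ⟨h.1, htπ⟩
      · exfalso; have := h.1; linarith
      · exact Or.inr ⟨ht0, h.2⟩
    calc volume _ ≤ volume (Set.Ioo (ψ-β) π ∪ Set.Ico 0 (ψ-π+β)) := measure_mono hsub
      _ ≤ volume (Set.Ioo (ψ-β) π) + volume (Set.Ico (0:ℝ) (ψ-π+β)) := measure_union_le _ _
      _ ≤ ENNReal.ofReal (2*β) := by
          rw [Real.volume_Ioo, Real.volume_Ico,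
            ← ENNReal.ofReal_add (by linarith) (by linarith)]
          apply ENNReal.ofReal_le_ofReal
          linarith

lemma exists_good_t (m : ℕ) (ψ : Fin m → ℝ) (hψ : ∀ i, ψ i ∈ Set.Ico 0 π) (β : ℝ)
    (hβ0 : 0 < β) (hβ2 : β ≤ π/2) (hsum : 2*(m:ℝ)*β < π) :
    ∃ t ∈ Set.Ico (0:ℝ) π, ∀ i,
      β ≤ |t - ψ i| ∧ β ≤ |t - ψ i - π| ∧ β ≤ |t - ψ i + π| := by
  have hπ := pi_pos
  set Bad : Fin m → Set ℝ := fun i =>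
    Ioo (ψ i - β) (ψ i + β) ∪ Ioo (ψ i + π - β) (ψ i + π + β) ∪ Ioo (ψ i - π - β) (ψ i - π + β)
    with hBad
  by_contra hcon
  push_neg at hcon
  have hsub : Set.Ico (0:ℝ) π ⊆ ⋃ i, (Set.Ico (0:ℝ) π ∩ Bad i) := by
    intro t ht
    obtain ⟨i, hi⟩ := hcon t ht
    refine Set.mem_iUnion.mpr ⟨i, ht, ?_⟩
    rw [hBad]
    by_contra hni
    simp only [Set.mem_union, Set.mem_Ioo, not_or, not_and_or, not_lt] at hni
    obtain ⟨⟨h1, h2⟩, h3⟩ := hni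
    have hA : β ≤ |t - ψ i| := by
      rcases h1 with h | h
      · rw [le_abs]; right; linarith
      · rw [le_abs]; left; linarith
    have hB : β ≤ |t - ψ i - π| := by
      rcases h2 with h | h
      · rw [le_abs]; right; linarith
      · rw [le_abs]; left; linarith
    have hC : β ≤ |t - ψ i + π| := by
      rcases h3 with h | h
      · rw [le_abs]; right; linarith
      · rw [le_abs]; left; linarith
    exact absurd (hi hA hB) (not_lt.mpr hC)
  have h1 : volume (Set.Ico (0:ℝ) π) ≤ ∑ i : Fin m, volume (Set.Ico (0:ℝ) π ∩ Bad i) :=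
    (measure_mono hsub).trans (measure_iUnion_fintype_le _ _)
  have h2 : ∑ i : Fin m, volume (Set.Ico (0:ℝ) π ∩ Bad i) ≤ ENNReal.ofReal (2*(m:ℝ)*β) := by
    calc ∑ i : Fin m, volume (Set.Ico (0:ℝ) π ∩ Bad i)
        ≤ ∑ _i : Fin m, ENNReal.ofReal (2*β) := Finset.sum_le_sum (fun i _ =>
          volume_bad_inter (ψ i) β (hψ i).1 (hψ i).2 hβ0 hβ2)
      _ = (m : ℝ≥0∞) * ENNReal.ofReal (2*β) := by
          rw [Finset.sum_const, Finset.card_univ, Fintype.card_fin, nsmul_eq_mul]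
      _ = ENNReal.ofReal (2*(m:ℝ)*β) := by
          rw [← ENNReal.ofReal_natCast, ← ENNReal.ofReal_mul (by positivity)]
          congr 1; ring
  rw [Real.volume_Ico, sub_zero] at h1
  have := h1.trans h2
  rw [ENNReal.ofReal_le_ofReal_iff (by positivity)] at this
  linarith

lemma circle_case (m : ℕ) (w : Fin m → EuclideanSpace ℝ (Fin 2)) (hw : ∀ i, ‖w i‖ = 1)
    (N : ℝ) (hN : 6 ≤ N) (hm : 2*(m:ℝ) ≤ N) :
    ∃ x : EuclideanSpace ℝ (Fin 2), x ≠ 0 ∧ ‖x‖ ≤ 1 ∧ ∀ i, 2/N ≤ |⟪w i, x⟫| := by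
  have hπ := pi_pos
  have hπ3 := pi_gt_three
  have hN0 : (0:ℝ) < N := by linarith
  set β : ℝ := 14/(5*N) with hβ
  have hβ0 : 0 < β := by positivity
  have hβ1 : β ≤ 7/15 := by
    rw [hβ, div_le_div_iff₀ (by positivity) (by norm_num)]
    linarith
  have hβ2 : β ≤ π/2 := by linarith
  -- angles
  have hφ : ∀ i, ∃ φ : ℝ, w i 0 = Real.cos φ ∧ w i 1 = Real.sin φ :=
    fun i => exists_angle (w i) (hw i)
  choose φ hφ0 hφ1 using hφ
  set ψ : Fin m → ℝ := fun i => φ i + π/2 - π * ⌊(φ i + π/2)/π⌋ with hψdef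
  have hψmem : ∀ i, ψ i ∈ Set.Ico 0 π := by
    intro i
    have h1 : ψ i = π * Int.fract ((φ i + π/2)/π) := by
      rw [hψdef, Int.fract]
      field_simp
    constructor
    · rw [h1]; exact mul_nonneg (le_of_lt hπ) (Int.fract_nonneg _)
    · rw [h1]
      calc π * Int.fract ((φ i + π/2)/π) < π * 1 :=
            (mul_lt_mul_iff_right₀ hπ).mpr (Int.fract_lt_one _)
        _ = π := mul_one π
  have hψrel : ∀ i, φ i + π/2 = ψ i + (⌊(φ i + π/2)/π⌋ : ℤ) * π := by
    intro i; rw [hψdef]; push_cast; ring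
  -- good t
  have hsum : 2*(m:ℝ)*β < π := by
    have : 2*(m:ℝ)*β ≤ N*β := mul_le_mul_of_nonneg_right hm (le_of_lt hβ0)
    have hNβ : N*β = 14/5 := by rw [hβ]; field_simp
    linarith
  obtain ⟨t, htmem, ht⟩ := exists_good_t m ψ hψmem β hβ0 hβ2 hsum
  refine ⟨thetaVec t, ?_, ?_, ?_⟩
  · intro h
    have := thetaVec_norm t
    rw [h, norm_zero] at this
    norm_num at this
  · rw [thetaVec_norm]
  · intro i
    have heq : |⟪w i, thetaVec t⟫| = |Real.sin (t - ψ i)| :=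
      abs_inner_thetaVec t (φ i) (ψ i) _ (hψrel i) (w i) (hφ0 i) (hφ1 i)
    rw [heq]
    obtain ⟨h1, h2, h3⟩ := ht i
    have hs : |t - ψ i| < π := by
      rw [abs_lt]
      obtain ⟨ht0, htπ⟩ := htmem
      obtain ⟨hψ0, hψπ⟩ := hψmem i
      constructor <;> linarith
    have hsin : sin β ≤ |Real.sin (t - ψ i)| := by
      apply sin_ge_of_dist β _ (le_of_lt hβ0) hβ2 hs h1 _ h3
      rwa [show t - ψ i - π = t - ψ i - π from rfl]
    have hsinβ : 2/N ≤ sin β := by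
      have hcube : β - β^3/4 < sin β := by
        have := Real.sin_gt_sub_cube hβ0; have : 0 < β^3 := (by positivity); linarith
      have hkey : (β - β^3/4) - 2/N = (100*N^2 - 686)/(125*N^3) := by
        rw [hβ]; field_simp; ring
      have hpos : 0 ≤ (100*N^2 - 686)/(125*N^3) := by
        apply div_nonneg _ (by positivity)
        nlinarith [hN]
      linarith
    linarith


lemma vol_from_real (d : ℕ) (r x : ℝ) (hr : 0 < r) (hx : x < r)
    (hlow : ENNReal.ofReal r * volume (closedBall (0 : EuclideanSpace ℝ (Fin d)) 1) ≤
      volume (closedBall (0 : EuclideanSpace ℝ (Fin (d+1))) 1)) :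
    ENNReal.ofReal x * volume (closedBall (0 : EuclideanSpace ℝ (Fin d)) 1) <
      volume (closedBall (0 : EuclideanSpace ℝ (Fin (d+1))) 1) := by
  have hV0 : volume (closedBall (0 : EuclideanSpace ℝ (Fin d)) 1) ≠ 0 := by
    refine ne_of_gt (measure_closedBall_pos volume 0 one_pos)
  have hVtop : volume (closedBall (0 : EuclideanSpace ℝ (Fin d)) 1) ≠ ⊤ :=
    measure_closedBall_lt_top.ne
  refine lt_of_lt_of_le ?_ hlow
  rw [mul_comm (ENNReal.ofReal x), mul_comm (ENNReal.ofReal r),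
    ENNReal.mul_lt_mul_iff_right hV0 hVtop]
  exact ENNReal.ofReal_lt_ofReal_iff hr |>.mpr hx

set_option maxHeartbeats 1000000 in
/-- Lemma 8.4: a common good one-dimensional projection direction for at most
`n(n−1)/2` vectors of `ℝ^k`. -/
theorem common_good_one_dimensional_projection
    (n k m : ℕ) (hn : 2 ≤ n) (hk : 1 ≤ k) (hm : 2 * m ≤ n * (n - 1))
    (u : Fin m → EuclideanSpace ℝ (Fin k)) :
    ∃ S : Submodule ℝ (EuclideanSpace ℝ (Fin k)),
      Module.finrank ℝ S = 1 ∧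
      ∀ i, ‖u i‖ / (Real.pi / 2) ^ (k - 1) *
          (Real.pi / ((n : ℝ) * ((n : ℝ) - 1))) ^ xiSum (k - 1) ≤
        ‖(S.orthogonalProjection (u i) : EuclideanSpace ℝ (Fin k))‖ := by
  classical
  have hπ := pi_pos
  have hπ3 := pi_gt_three
  set N : ℝ := (n:ℝ) * ((n:ℝ) - 1) with hNdef
  set ξ : ℝ := xiSum (k-1) with hξdef
  set c : ℝ := 1/(π/2)^(k-1) * (π/N)^ξ with hcdef
  have hn2 : (2:ℝ) ≤ (n:ℝ) := by exact_mod_cast hn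
  have hN2 : (2:ℝ) ≤ N := by rw [hNdef]; nlinarith
  have hN0 : (0:ℝ) < N := by linarith
  have hc0 : 0 < c := by
    rw [hcdef]
    have h1 : (0:ℝ) < (π/N)^ξ := Real.rpow_pos_of_pos (by positivity) ξ
    positivity
  suffices H : ∃ x : EuclideanSpace ℝ (Fin k), x ≠ 0 ∧
      ∀ i, c * ‖u i‖ * ‖x‖ ≤ |⟪x, u i⟫| by
    obtain ⟨x, hx0, hx⟩ := H
    have hxn : 0 < ‖x‖ := norm_pos_iff.mpr hx0
    refine ⟨Submodule.span ℝ {x}, finrank_span_singleton hx0, fun i => ?_⟩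
    have hproj := Submodule.starProjection_singleton (𝕜 := ℝ) (v := x) (u i)
    have hcoe : (RCLike.ofReal (K := ℝ) (‖x‖^2)) = ‖x‖^2 := rfl
    rw [hcoe] at hproj
    rw [← Submodule.starProjection_apply, hproj, norm_smul]
    have hns : ‖(⟪x, u i⟫ / ((‖x‖^2 : ℝ) : ℝ) : ℝ)‖ * ‖x‖ = |⟪x, u i⟫| / ‖x‖ := by
      rw [Real.norm_eq_abs, abs_div]
      have hcoe : |(((‖x‖^2 : ℝ) : ℝ) : ℝ)| = ‖x‖^2 := by
        rw [abs_of_nonneg (by positivity)]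
      rw [hcoe]
      field_simp
    rw [hns, le_div_iff₀ hxn]
    calc ‖u i‖ / (π/2)^(k-1) * (π/N)^ξ * ‖x‖ = c * ‖u i‖ * ‖x‖ := by
          rw [hcdef]; ring
      _ ≤ |⟪x, u i⟫| := hx i
  -- Case k = 1
  rcases Nat.eq_or_lt_of_le hk with hk1 | hk2
  · -- k = 1
    have hk1' : k = 1 := hk1.symm
    subst hk1'
    have hc1 : c = 1 := by
      rw [hcdef, hξdef]
      norm_num [xiSum_zero, Real.rpow_zero]
    refine ⟨EuclideanSpace.single 0 1, ?_, ?_⟩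
    · intro h
      have := congrArg (fun v : EuclideanSpace ℝ (Fin 1) => v 0) h
      simp [EuclideanSpace.single_apply] at this
    · intro i
      have hinner : ⟪EuclideanSpace.single (0 : Fin 1) (1:ℝ), u i⟫ = u i 0 := by
        rw [EuclideanSpace.inner_single_left]
        simp
      have hnorm1 : ‖EuclideanSpace.single (0 : Fin 1) (1:ℝ)‖ = 1 := by
        rw [EuclideanSpace.norm_single]; norm_num
      have hnormu : ‖u i‖ = |u i 0| := by
        rw [EuclideanSpace.norm_eq, Fin.sum_univ_one, Real.norm_eq_abs, sq_abs,
          Real.sqrt_sq_eq_abs]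
      rw [hinner, hc1, hnorm1, hnormu, mul_one, one_mul]
  -- now k ≥ 2
  have hk2' : 2 ≤ k := hk2
  have hk1n : k - 1 ≥ 1 := by omega
  have hξ1 : 1 ≤ ξ := by rw [hξdef]; exact one_le_xiSum hk1n
  rcases Nat.eq_or_lt_of_le hn with hn2' | hn3
  · -- n = 2, so m ≤ 1
    have hn2'' : n = 2 := hn2'.symm
    subst hn2''
    have hm1 : m ≤ 1 := by omega
    have hNeq : N = 2 := by rw [hNdef]; norm_num
    have hc1 : c ≤ 1 := by
      rw [hcdef, hNeq]
      have hbase : (1:ℝ) ≤ π/2 := by linarith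
      have hle : (π/2)^ξ ≤ (π/2)^((k-1 : ℕ) : ℝ) := by
        apply Real.rpow_le_rpow_of_exponent_le hbase
        rw [hξdef]
        exact_mod_cast xiSum_le (k-1)
      rw [Real.rpow_natCast] at hle
      rw [div_mul_eq_mul_div, one_mul, div_le_one (by positivity)]
      exact hle
    by_cases hex : ∀ i, u i = 0
    · refine ⟨EuclideanSpace.single ⟨0, by omega⟩ 1, ?_, ?_⟩
      · intro h
        have := congrArg (fun v : EuclideanSpace ℝ (Fin k) => v ⟨0, by omega⟩) h
        simp [EuclideanSpace.single_apply] at this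
      · intro i
        rw [hex i]
        simp
    · push_neg at hex
      obtain ⟨j, hj⟩ := hex
      refine ⟨u j, hj, fun i => ?_⟩
      have hij : i = j := by
        have h1 : (i : ℕ) < m := i.2
        have h2 : (j : ℕ) < m := j.2
        apply Fin.ext
        omega
      subst hij
      rw [real_inner_self_eq_norm_sq, abs_of_nonneg (by positivity)]
      nlinarith [norm_nonneg (u i), hc0]
  · -- n ≥ 3
    have hn3' : (3:ℝ) ≤ (n:ℝ) := by exact_mod_cast hn3
    have hN6 : (6:ℝ) ≤ N := by rw [hNdef]; nlinarith
    have hm' : 2*(m:ℝ) ≤ N := by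
      rw [hNdef]
      have := hm
      have hcast : ((n * (n-1) : ℕ) : ℝ) = (n:ℝ) * ((n:ℝ) - 1) := by
        push_cast [Nat.cast_sub (by omega : 1 ≤ n)]
        ring
      calc 2*(m:ℝ) = ((2*m : ℕ) : ℝ) := by push_cast; ring
        _ ≤ ((n * (n-1) : ℕ) : ℝ) := by exact_mod_cast hm
        _ = (n:ℝ) * ((n:ℝ) - 1) := hcast
    by_cases hm0 : m = 0
    · subst hm0
      refine ⟨EuclideanSpace.single ⟨0, by omega⟩ 1, ?_, fun i => i.elim0⟩
      intro h
      have := congrArg (fun v : EuclideanSpace ℝ (Fin k) => v ⟨0, by omega⟩) h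
      simp [EuclideanSpace.single_apply] at this
    -- unit vectors
    set w : Fin m → EuclideanSpace ℝ (Fin k) := fun i =>
      if h : u i = 0 then EuclideanSpace.single ⟨0, by omega⟩ 1 else ‖u i‖⁻¹ • u i with hwdef
    have hw1 : ∀ i, ‖w i‖ = 1 := by
      intro i
      simp only [hwdef]
      by_cases h : u i = 0
      · rw [dif_pos h, EuclideanSpace.norm_single]; norm_num
      · rw [dif_neg h, norm_smul, norm_inv, norm_norm,
          inv_mul_cancel₀ (norm_ne_zero_iff.mpr h)]
    have hkey : ∀ x : EuclideanSpace ℝ (Fin k), x ≠ 0 → ‖x‖ ≤ 1 →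
        (∀ i, c ≤ |⟪w i, x⟫|) → ∃ y : EuclideanSpace ℝ (Fin k), y ≠ 0 ∧
          ∀ i, c * ‖u i‖ * ‖y‖ ≤ |⟪y, u i⟫| := by
      intro x hx0 hx1 hxi
      refine ⟨x, hx0, fun i => ?_⟩
      by_cases h : u i = 0
      · rw [h]
        simp
      · have hwi : w i = ‖u i‖⁻¹ • u i := by rw [hwdef]; exact dif_neg h
        have hinner : ⟪w i, x⟫ = ‖u i‖⁻¹ * ⟪u i, x⟫ := by
          rw [hwi, real_inner_smul_left]
        have habs : |⟪u i, x⟫| = ‖u i‖ * |⟪w i, x⟫| := by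
          rw [hinner, abs_mul, abs_of_nonneg (by positivity : (0:ℝ) ≤ ‖u i‖⁻¹),
            ← mul_assoc, mul_inv_cancel₀ (norm_ne_zero_iff.mpr h), one_mul]
        have h1 := hxi i
        have hnu : 0 < ‖u i‖ := norm_pos_iff.mpr h
        rw [real_inner_comm, habs]
        calc c * ‖u i‖ * ‖x‖ ≤ c * ‖u i‖ * 1 := by
              apply mul_le_mul_of_nonneg_left hx1 (by positivity)
          _ = ‖u i‖ * c := by ring
          _ ≤ ‖u i‖ * |⟪w i, x⟫| := by
              apply mul_le_mul_of_nonneg_left h1 (by positivity)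
    -- case k = 2 : circle
    rcases Nat.eq_or_lt_of_le hk2' with hkk2 | hkk3
    · have hkk2' : k = 2 := hkk2.symm
      subst hkk2'
      have hceq : c = 2/N := by
        rw [hcdef, hξdef]
        norm_num [xiSum_one, Real.rpow_one]
        try field_simp
        try ring
      obtain ⟨x, hx0, hx1, hxi⟩ := circle_case m w hw1 N hN6 hm'
      exact hkey x hx0 hx1 (fun i => hceq ▸ hxi i)
    · -- k ≥ 3
      obtain ⟨d, rfl⟩ : ∃ d, k = d + 1 := ⟨k - 1, by omega⟩
      have hd2 : 2 ≤ d := by omega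
      -- bound N * c
      have hAbound : N * c ≤ 6 * (π/6)^ξ * (2/π)^d := by
        have h := A_bound N hN6 d ξ hξ1
        have hck : c = 1/(π/2)^d * (π/N)^ξ := by
          rw [hcdef]
          norm_num
        rw [hck]
        exact h
      have hmc : (m:ℝ) * (2*c) ≤ N * c := by
        have : (m:ℝ) * (2*c) = (2*(m:ℝ)) * c := by ring
        rw [this]
        exact mul_le_mul_of_nonneg_right hm' (le_of_lt hc0)
      have hπ6a : (0:ℝ) < π/6 := by positivity
      have hπ6b : π/6 ≤ 1 := by nlinarith [pi_le_four]
      -- produce x via the avoiding lemma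
      have hfinal : ∃ x : EuclideanSpace ℝ (Fin (d+1)), ‖x‖ ≤ 1 ∧ ∀ i, c ≤ |⟪w i, x⟫| := by
        rcases Nat.eq_or_lt_of_le hd2 with hd2' | hd3
        · -- d = 2
          have hd2'' : d = 2 := hd2'.symm
          subst hd2''
          have hξv : ξ = 3/2 := by rw [hξdef]; norm_num [xiSum_two]
          have hnum : (m:ℝ) * (2*c) < 31/32 := by
            have h1 : N * c ≤ 6 * (π/6)^((3:ℝ)/2) * (2/π)^(2:ℕ) := by
              rw [← hξv]
              simpa using hAbound
            have h2 := B3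
            calc (m:ℝ)*(2*c) ≤ N*c := hmc
              _ ≤ 6 * (π/6)^((3:ℝ)/2) * (2/π)^(2:ℕ) := h1
              _ < 31/32 := h2
          apply exists_avoiding 2 m w hw1 c hc0
          exact vol_from_real 2 (31/32) _ (by norm_num) hnum lower_cyl3
        · -- d ≥ 3
          have hlow := lower_cyl d
          have hr0 : (0:ℝ) < (Real.sqrt 3/2)^d := by positivity
          apply exists_avoiding d m w hw1 c hc0
          apply vol_from_real d ((Real.sqrt 3/2)^d) _ hr0 _ hlow
          rcases Nat.eq_or_lt_of_le hd3 with hd3' | hd4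
          · -- d = 3
            have hd3'' : d = 3 := hd3'.symm
            subst hd3''
            have hξv : ξ = 11/6 := by rw [hξdef]; norm_num [xiSum_three]
            have h1 : (π/6)^ξ ≤ (π/6)^((3:ℝ)/2) := by
              apply Real.rpow_le_rpow_of_exponent_ge hπ6a hπ6b
              rw [hξv]; norm_num
            have h2 : N * c ≤ 6 * (π/6)^((3:ℝ)/2) * (2/π)^(3:ℕ) := by
              refine hAbound.trans ?_
              have : (0:ℝ) ≤ (2/π)^(3:ℕ) := by positivity
              nlinarith [h1, this]
            calc (m:ℝ)*(2*c) ≤ N*c := hmc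
              _ ≤ 6 * (π/6)^((3:ℝ)/2) * (2/π)^(3:ℕ) := h2
              _ < (Real.sqrt 3/2)^(3:ℕ) := B4
          · -- d ≥ 4
            have hd4' : 4 ≤ d := hd4
            have h1 : (π/6)^ξ ≤ (π/6)^(1:ℝ) := by
              apply Real.rpow_le_rpow_of_exponent_ge hπ6a hπ6b hξ1
            rw [Real.rpow_one] at h1
            have h2 : N * c ≤ π * (2/π)^d := by
              refine hAbound.trans ?_
              have h3 : (0:ℝ) ≤ (2/π)^d := by positivity
              have : 6 * (π/6)^ξ * (2/π)^d ≤ 6 * (π/6) * (2/π)^d := by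
                nlinarith [h1, h3]
              calc 6 * (π/6)^ξ * (2/π)^d ≤ 6 * (π/6) * (2/π)^d := this
                _ = π * (2/π)^d := by ring
            calc (m:ℝ)*(2*c) ≤ N*c := hmc
              _ ≤ π * (2/π)^d := h2
              _ < (Real.sqrt 3/2)^d := B5 d hd4'
      obtain ⟨x, hx1, hxi⟩ := hfinal
      have hx0 : x ≠ 0 := by
        intro h
        have h1 := hxi ⟨0, by omega⟩
        rw [h, inner_zero_right, abs_zero] at h1
        linarith
      exact hkey x hx0 hx1 hxi
end
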